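/- arXiv:1211.2614 — 6 statements merged into one kernel-verified Lean document; each statement's English description precedes it below -/
import Mathlib

section
/- Let G be a finite group and let H ⊴ G be a normal subgroup such that G/H is isomorphic to C_p × C_p for a prime p. Then d(G) ≤ (d(H)+2)p − 2 ≤ |G|/p + p − 2. -/
/-- The set of all products of the terms of the multiset `S` taken in some order. -/
def prodSet {G : Type*} [Group G] (S : Multiset G) : Set G :=
  {g | ∃ l : List G, (l : Multiset G) = S ∧ l.prod = g}

/-- A sequence (multiset) over `G` is a product-one sequence if its terms can be
ordered so that their product is `1`. -/
def IsProductOne {G : Type*} [Group G] (S : Multiset G) : Prop :=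
  (1 : G) ∈ prodSet S

/-- A minimal product-one sequence (atom): a nontrivial product-one sequence that cannot
be partitioned into two nontrivial product-one subsequences. -/
def IsMinimalProductOne {G : Type*} [Group G] (S : Multiset G) : Prop :=
  S ≠ 0 ∧ IsProductOne S ∧
    ¬ ∃ T₁ T₂ : Multiset G, T₁ ≠ 0 ∧ T₂ ≠ 0 ∧ S = T₁ + T₂ ∧
      IsProductOne T₁ ∧ IsProductOne T₂

/-- The small Davenport constant: the maximal length of a sequence over `G` having
no nontrivial product-one subsequence. -/
noncomputable def smallDavenport (G : Type*) [Group G] : ℕ :=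
  sSup {n | ∃ S : Multiset G, Multiset.card S = n ∧
    ∀ T : Multiset G, T ≤ S → T ≠ 0 → ¬ IsProductOne T}

/-- The large Davenport constant: the maximal length of a minimal product-one sequence. -/
noncomputable def largeDavenport (G : Type*) [Group G] : ℕ :=
  sSup {n | ∃ S : Multiset G, Multiset.card S = n ∧ IsMinimalProductOne S}

/-! ### Multiset pullback lemmas -/

theorem exists_le_map' {α β : Type*} {f : α → β} :
    ∀ (s : Multiset α) (t : Multiset β), t ≤ s.map f → ∃ u ≤ s, u.map f = t := by
  classical
  intro s
  induction s using Multiset.induction_on with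
  | empty => intro t ht; simp at ht; exact ⟨0, le_refl _, by simp [ht]⟩
  | cons a s ih =>
    intro t ht
    rw [Multiset.map_cons] at ht
    by_cases hfa : f a ∈ t
    · have h1 : t.erase (f a) ≤ s.map f := by
        rw [Multiset.erase_le_iff_le_cons]; exact ht
      obtain ⟨u, hu, hmu⟩ := ih _ h1
      exact ⟨a ::ₘ u, Multiset.cons_le_cons _ hu, by
        rw [Multiset.map_cons, hmu, Multiset.cons_erase hfa]⟩
    · have h1 : t ≤ s.map f := (Multiset.le_cons_of_notMem hfa).mp ht
      obtain ⟨u, hu, hmu⟩ := ih _ h1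
      exact ⟨u, le_trans hu (Multiset.le_cons_self _ _), hmu⟩

theorem exists_list_map' {α β : Type*} {f : α → β} :
    ∀ (l : List β) (s : Multiset α), s.map f = ↑l →
      ∃ l' : List α, (↑l' : Multiset α) = s ∧ l'.map f = l := by
  classical
  intro l
  induction l with
  | nil => intro s hs; simp at hs; exact ⟨[], by simp [hs], rfl⟩
  | cons b bs ih =>
    intro s hs
    have hb : b ∈ s.map f := by rw [hs]; simp
    obtain ⟨a, ha, hfa⟩ := Multiset.mem_map.mp hb
    have hsplit : s = a ::ₘ s.erase a := (Multiset.cons_erase ha).symm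
    have h2 : (s.erase a).map f = ↑bs := by
      have h3 : s.map f = f a ::ₘ (s.erase a).map f := by
        conv_lhs => rw [hsplit]
        rw [Multiset.map_cons]
      rw [hs] at h3
      have h4 : b ::ₘ (↑bs : Multiset β) = f a ::ₘ (s.erase a).map f := by
        rw [← h3]; rfl
      rw [hfa] at h4
      exact ((Multiset.cons_inj_right _).mp h4).symm
    obtain ⟨l', hl', hml'⟩ := ih _ h2
    refine ⟨a :: l', ?_, by simp [hml', hfa]⟩
    have : (↑(a :: l') : Multiset α) = a ::ₘ (↑l' : Multiset α) := rfl
    rw [this, hl', ← hsplit]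

theorem multiset_sum_le_sum {α : Type*} {s t : Multiset (Multiset α)} (h : s ≤ t) :
    s.sum ≤ t.sum := by
  obtain ⟨u, rfl⟩ := Multiset.le_iff_exists_add.mp h
  rw [Multiset.sum_add]
  exact le_add_right (le_refl _)

theorem coe_flatten_eq {α : Type*} (LL : List (List α)) :
    (↑LL.flatten : Multiset α) = (LL.map (Multiset.ofList : List α → Multiset α)).sum := by
  induction LL with
  | nil => simp
  | cons h t ih => simp [List.flatten_cons, ← Multiset.coe_add, ih]

/-! ### Chevalley–Warning based zero-sum lemmas over `C_p × C_p` -/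

open MvPolynomial in
theorem cw_core {p n m : ℕ} [Fact p.Prime] (w : Fin m → Fin n → ZMod p)
    (hdeg : m * (p - 1) < n) :
    ∃ A : Finset (Fin n), A.Nonempty ∧ ∀ j, ∑ i ∈ A, w j i = 0 := by
  classical
  have hp2 : 2 ≤ p := (Fact.out : p.Prime).two_le
  set f : Fin m → MvPolynomial (Fin n) (ZMod p) :=
    fun j => ∑ i, MvPolynomial.C (w j i) * MvPolynomial.X i ^ (p - 1) with hf
  have hdegf : ∀ j, (f j).totalDegree ≤ p - 1 := by
    intro j
    refine le_trans (totalDegree_finset_sum _ _) ?_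
    refine Finset.sup_le fun i _ => ?_
    refine le_trans (totalDegree_mul _ _) ?_
    simp [totalDegree_X_pow]
  have hlt : (∑ j, (f j).totalDegree) < Fintype.card (Fin n) := by
    rw [Fintype.card_fin]
    calc (∑ j, (f j).totalDegree) ≤ ∑ _j : Fin m, (p-1) := Finset.sum_le_sum fun j _ => hdegf j
    _ = m * (p-1) := by simp [Finset.sum_const, mul_comm]
    _ < n := hdeg
  have hdvd := char_dvd_card_solutions_of_fintype_sum_lt p hlt (K := ZMod p) (f := f)
  have h0 : ∀ j, eval (0 : Fin n → ZMod p) (f j) = 0 := by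
    intro j
    simp [hf, eval_sum, zero_pow (by omega : p - 1 ≠ 0)]
  have hcardpos : 0 < Fintype.card { x : Fin n → ZMod p // ∀ j, eval x (f j) = 0 } :=
    Fintype.card_pos_iff.mpr ⟨⟨0, h0⟩⟩
  have hdvd' : p ∣ Fintype.card { x : Fin n → ZMod p // ∀ j, eval x (f j) = 0 } := by
    convert hdvd
  have hcard : 1 < Fintype.card { x : Fin n → ZMod p // ∀ j, eval x (f j) = 0 } :=
    lt_of_lt_of_le hp2 (Nat.le_of_dvd hcardpos hdvd')
  obtain ⟨⟨x, hx⟩, hxne⟩ := Fintype.exists_ne_of_one_lt_card hcard ⟨0, h0⟩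
  have hxne0 : x ≠ 0 := fun h => hxne (Subtype.ext h)
  set A : Finset (Fin n) := Finset.univ.filter (fun i => x i ≠ 0) with hA
  refine ⟨A, ?_, ?_⟩
  · obtain ⟨i, hi⟩ := Function.ne_iff.mp hxne0
    exact ⟨i, by simp only [hA, Finset.mem_filter, Finset.mem_univ, true_and]; simpa using hi⟩
  · intro j
    have he : eval x (f j) = ∑ i, w j i * x i ^ (p - 1) := by
      simp [hf, eval_sum]
    have hsum : ∑ i ∈ A, w j i = ∑ i, w j i * x i ^ (p - 1) := by
      rw [hA, Finset.sum_filter]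
      refine Finset.sum_congr rfl fun i _ => ?_
      by_cases hxi : x i = 0
      · simp [hxi, zero_pow (by omega : p - 1 ≠ 0)]
      · simp [hxi, ZMod.pow_card_sub_one_eq_one hxi]
    rw [hsum, ← he, hx j]

theorem sub_multiset_of_indices {α : Type*} [AddCommMonoid α] (l : List α)
    (A : Finset (Fin l.length)) :
    (A.val.map l.get : Multiset α) ≤ ↑l ∧
    Multiset.card (A.val.map l.get) = A.card ∧
    (A.val.map l.get).sum = ∑ i ∈ A, l.get i := by
  refine ⟨?_, by simp, rfl⟩
  have h2 : (Finset.univ : Finset (Fin l.length)).val.map l.get = ↑l := by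
    rw [Fin.univ_def]
    show Multiset.map l.get (↑(List.finRange l.length)) = _
    rw [Multiset.map_coe, List.map_get_finRange]
  rw [← h2]
  exact Multiset.map_le_map (Finset.val_le_iff.mpr (Finset.subset_univ A))

/-- Olson / van Emde Boas: the Davenport constant of `C_p × C_p` is `2p-1`. -/
theorem zero_sum_of_card {p : ℕ} [Fact p.Prime] (s : Multiset (ZMod p × ZMod p))
    (hs : 2 * p - 1 ≤ Multiset.card s) :
    ∃ t ≤ s, t ≠ 0 ∧ t.sum = 0 := by
  have hp2 : 2 ≤ p := (Fact.out : p.Prime).two_le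
  set l := s.toList with hl
  have hlen : l.length = Multiset.card s := Multiset.length_toList s
  have hls : (↑l : Multiset (ZMod p × ZMod p)) = s := Multiset.coe_toList s
  set v : Fin l.length → ZMod p × ZMod p := l.get with hv
  set w : Fin 2 → Fin l.length → ZMod p := fun j i => ![(v i).1, (v i).2] j with hw
  obtain ⟨A, hAne, hAsum⟩ := cw_core w (by rw [hlen]; omega)
  obtain ⟨hle, hcard, hsum⟩ := sub_multiset_of_indices l A
  refine ⟨A.val.map l.get, by rw [← hls]; exact hle, ?_, ?_⟩
  · intro h0
    have hz : Multiset.card (A.val.map l.get) = 0 := by rw [h0]; rfl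
    rw [hcard] at hz
    exact hAne.ne_empty (Finset.card_eq_zero.mp hz)
  · rw [hsum]
    have h1 := hAsum 0
    have h2 := hAsum 1
    simp only [hw, Matrix.cons_val_zero, Matrix.cons_val_one, Matrix.head_cons] at h1 h2
    refine Prod.ext ?_ ?_
    · rw [Prod.fst_sum]; exact h1
    · rw [Prod.snd_sum]; exact h2

/-- Short zero-sum subsequences: `η(C_p × C_p) ≤ 3p - 2`. -/
theorem short_zero_sum_of_card {p : ℕ} [Fact p.Prime] (s : Multiset (ZMod p × ZMod p))
    (hs : 3 * p - 2 ≤ Multiset.card s) :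
    ∃ t ≤ s, t ≠ 0 ∧ Multiset.card t ≤ p ∧ t.sum = 0 := by
  classical
  have hp2 : 2 ≤ p := (Fact.out : p.Prime).two_le
  set l0 := s.toList.take (3 * p - 2) with hl0
  have hsub : (↑l0 : Multiset (ZMod p × ZMod p)) ≤ s := by
    have h1 : List.Sublist l0 s.toList := List.take_sublist _ _
    have := h1.subperm
    rw [← Multiset.coe_toList s]
    exact this
  have hlen : l0.length = 3 * p - 2 := by
    rw [hl0, List.length_take, Multiset.length_toList]
    omega
  set v : Fin l0.length → ZMod p × ZMod p := l0.get with hv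
  set w : Fin 3 → Fin l0.length → ZMod p := fun j i => ![(v i).1, (v i).2, 1] j with hw
  obtain ⟨A, hAne, hAsum⟩ := cw_core w (by rw [hlen]; omega)
  obtain ⟨hle, hcard, hsum⟩ := sub_multiset_of_indices l0 A
  set t : Multiset (ZMod p × ZMod p) := A.val.map l0.get with ht
  have hts : t ≤ s := le_trans hle hsub
  have htsum : t.sum = 0 := by
    rw [hsum]
    have h1 := hAsum 0
    have h2 := hAsum 1
    simp only [hw, Matrix.cons_val_zero, Matrix.cons_val_one, Matrix.head_cons] at h1 h2
    refine Prod.ext ?_ ?_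
    · rw [Prod.fst_sum]; exact h1
    · rw [Prod.snd_sum]; exact h2
  have hAcard : p ∣ A.card := by
    have h3 := hAsum 2
    simp only [hw] at h3
    have : ((A.card : ℕ) : ZMod p) = 0 := by
      rw [← h3]; simp [Finset.sum_const]
    exact (ZMod.natCast_eq_zero_iff _ _).mp this
  have hA1 : 1 ≤ A.card := hAne.card_pos
  have hAle : A.card ≤ 3 * p - 2 := by
    calc A.card ≤ Fintype.card (Fin l0.length) := Finset.card_le_univ A
    _ = l0.length := Fintype.card_fin _
    _ = 3 * p - 2 := hlen
  obtain ⟨c, hc⟩ := hAcard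
  have hc12 : c = 1 ∨ c = 2 := by
    have h3 : p * c ≤ 3 * p - 2 := hc ▸ hAle
    have h1 : 1 ≤ p * c := hc ▸ hA1
    by_contra hcon
    push_neg at hcon
    have h03 : c = 0 ∨ 3 ≤ c := by omega
    rcases h03 with h | h
    · rw [h, Nat.mul_zero] at h1; omega
    · have : p * 3 ≤ p * c := Nat.mul_le_mul_left p h
      omega
  have htne : t ≠ 0 := by
    intro h0
    have hz : Multiset.card t = 0 := by rw [h0]; rfl
    rw [hcard] at hz
    omega
  have htcard : Multiset.card t = A.card := hcard
  rcases hc12 with hc1 | hc2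
  · exact ⟨t, hts, htne, by rw [htcard, hc, hc1, Nat.mul_one], htsum⟩
  · have htc : Multiset.card t = 2 * p := by rw [htcard, hc, hc2]; ring
    obtain ⟨a, ha⟩ := Multiset.exists_mem_of_ne_zero htne
    have herase : Multiset.card (t.erase a) = 2 * p - 1 := by
      rw [Multiset.card_erase_of_mem ha, htc, Nat.sub_one]
    obtain ⟨t', ht'le, ht'ne, ht'sum⟩ := zero_sum_of_card (t.erase a) (by omega)
    have ht't : t' ≤ t := le_trans ht'le (Multiset.erase_le a t)
    rcases le_or_gt (Multiset.card t') p with hle' | hgt'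
    · exact ⟨t', le_trans ht't hts, ht'ne, hle', ht'sum⟩
    · refine ⟨t - t', le_trans (Multiset.sub_le_self t t') hts, ?_, ?_, ?_⟩
      · intro h0
        have hct' : Multiset.card t' ≤ 2 * p - 1 := by
          have := Multiset.card_le_card ht'le
          omega
        have := congrArg Multiset.card h0
        rw [Multiset.card_sub ht't] at this
        simp at this
        omega
      · have := Multiset.card_le_card ht't
        rw [Multiset.card_sub ht't]
        omega
      · have hadd : t - t' + t' = t := tsub_add_cancel_of_le ht't
        have := congrArg Multiset.sum hadd
        rw [Multiset.sum_add, ht'sum, add_zero] at this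
        rw [htsum] at this
        exact this

/-! ### Pigeonhole: product-one free sequences are shorter than the group order -/

section PigeonHole
variable {K : Type*} [Group K] [Finite K]

theorem free_card_le (M : Multiset K)
    (hM : ∀ T ≤ M, T ≠ 0 → ¬ IsProductOne T) : Multiset.card M ≤ Nat.card K - 1 := by
  classical
  have : Fintype K := Fintype.ofFinite K
  set m := Nat.card K with hm
  have hm1 : 1 ≤ m := Nat.one_le_iff_ne_zero.mpr Nat.card_pos.ne'
  by_contra hcon
  push_neg at hcon
  have hcard : m ≤ Multiset.card M := by omega
  set l := M.toList with hl
  have hlen : l.length = Multiset.card M := Multiset.length_toList M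
  have hlM : (↑l : Multiset K) = M := Multiset.coe_toList M
  set g : Fin (m + 1) → K := fun i => (l.take i).prod with hg
  have key : ∀ i j : Fin (m + 1), (i : ℕ) < (j : ℕ) → g i = g j → False := by
    intro i j hij hgij
    set seg := (l.drop i).take ((j : ℕ) - i) with hseg
    have hji : (j : ℕ) = (i : ℕ) + ((j : ℕ) - (i : ℕ)) := by omega
    have htj : l.take (j : ℕ) = l.take (i : ℕ) ++ seg := by
      rw [hseg]
      conv_lhs => rw [hji]
      exact List.take_add (l := l) (i := i) (j := (j : ℕ) - (i : ℕ))
    have hprod : (l.take (i : ℕ)).prod * seg.prod = (l.take (i : ℕ)).prod := by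
      rw [← List.prod_append, ← htj]
      exact hgij.symm
    have hsegprod : seg.prod = 1 :=
      mul_left_cancel (hprod.trans (mul_one _).symm)
    have hsegne : seg ≠ [] := by
      have hjlen : (j : ℕ) ≤ l.length := by
        have : (j : ℕ) ≤ m := Nat.lt_succ_iff.mp j.isLt
        omega
      intro h0
      have := congrArg List.length h0
      rw [hseg] at this
      simp [List.length_take, List.length_drop] at this
      omega
    refine hM ↑seg ?_ (by simpa using hsegne) ⟨seg, rfl, hsegprod⟩
    rw [← hlM]
    exact Multiset.coe_le.mpr (((l.drop i).take_sublist _).trans (l.drop_sublist i)).subperm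
  obtain ⟨i, j, hij, hgij⟩ := Fintype.exists_ne_map_eq_of_card_lt g
    (by rw [Fintype.card_fin, ← Nat.card_eq_fintype_card]; omega)
  rcases lt_or_gt_of_ne hij with h | h
  · exact key i j (by exact_mod_cast h) hgij
  · exact key j i (by exact_mod_cast h) hgij.symm

theorem smallDavenport_le : smallDavenport K ≤ Nat.card K - 1 := by
  refine csSup_le' ?_
  rintro n ⟨S, hc, hf⟩
  exact hc ▸ free_card_le S hf

theorem exists_productOne_of_lt (M : Multiset K) (h : smallDavenport K < Multiset.card M) :
    ∃ W ≤ M, W ≠ 0 ∧ IsProductOne W := by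
  by_contra hcon
  push_neg at hcon
  have hmem : Multiset.card M ∈ {n | ∃ S : Multiset K, Multiset.card S = n ∧
      ∀ T : Multiset K, T ≤ S → T ≠ 0 → ¬ IsProductOne T} :=
    ⟨M, rfl, fun T hT hTne hTpo => (hcon T hT hTne) hTpo⟩
  have hbdd : BddAbove {n | ∃ S : Multiset K, Multiset.card S = n ∧
      ∀ T : Multiset K, T ≤ S → T ≠ 0 → ¬ IsProductOne T} := by
    refine ⟨Nat.card K - 1, ?_⟩
    rintro n ⟨S, hc, hf⟩
    exact hc ▸ free_card_le S hf
  exact absurd (le_csSup hbdd hmem) (not_le.mpr h)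
end PigeonHole

/-! ### Extraction of blocks with trivial image product -/

section Extract
variable {G : Type*} [Group G] {p : ℕ} [Fact p.Prime]

theorem map_list_sum_eq {f : G → ZMod p × ZMod p}
    (hf : ∀ x y, f (x * y) = f x + f y) (l : List G) : (l.map f).sum = f l.prod := by
  have hf1 : f 1 = 0 := by
    have h := hf 1 1
    rw [mul_one] at h
    exact add_eq_left.mp h.symm
  induction l with
  | nil => simp [hf1]
  | cons a l ih => simp [hf, ih]

theorem extract_blocks {f : G → ZMod p × ZMod p}
    (hf : ∀ x y, f (x * y) = f x + f y) :
    ∀ (n : ℕ) (S : Multiset G), (n + 1) * p - 1 ≤ Multiset.card S →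
      ∃ L : List (List G), L.length = n ∧
        (∀ l ∈ L, l ≠ [] ∧ (l.map f).sum = 0) ∧
        (L.map (Multiset.ofList : List G → Multiset G)).sum ≤ S := by
  classical
  have hp2 : 2 ≤ p := (Fact.out : p.Prime).two_le
  intro n
  induction n with
  | zero => intro S _; exact ⟨[], rfl, by simp, by simp⟩
  | succ n ih =>
    intro S hS
    rcases Nat.eq_zero_or_pos n with hn0 | hnpos
    · subst hn0
      have hcard : 2 * p - 1 ≤ Multiset.card (S.map f) := by
        rw [Multiset.card_map]; omega
      obtain ⟨t, htle, htne, htsum⟩ := zero_sum_of_card (S.map f) hcard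
      obtain ⟨u, huS, humap⟩ := exists_le_map' S t htle
      set l := u.toList with hl
      have hlu : (↑l : Multiset G) = u := Multiset.coe_toList u
      refine ⟨[l], rfl, ?_, ?_⟩
      · intro l' hl'
        rw [List.mem_singleton] at hl'
        subst hl'
        constructor
        · intro h0
          rw [h0] at hlu
          rw [← hlu] at humap
          simp at humap
          exact htne humap.symm
        · have : ((l.map f : List _) : Multiset _) = t := by
            rw [← humap, ← hlu]
            simp [Multiset.map_coe]
          calc (l.map f).sum = (((l.map f : List _) : Multiset _)).sum := by
                rw [Multiset.sum_coe]
          _ = t.sum := by rw [this]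
          _ = 0 := htsum
      · simp [hlu, huS]
    · have hcard : 3 * p - 2 ≤ Multiset.card (S.map f) := by
        rw [Multiset.card_map]
        have h4 : (n + 2) * p - 1 ≤ Multiset.card S := hS
        have h3 : 3 * p ≤ (n + 2) * p := Nat.mul_le_mul_right p (by omega)
        omega
      obtain ⟨t, htle, htne, htcard, htsum⟩ := short_zero_sum_of_card (S.map f) hcard
      obtain ⟨u, huS, humap⟩ := exists_le_map' S t htle
      have hucard : Multiset.card u ≤ p := by
        have : Multiset.card (u.map f) = Multiset.card u := Multiset.card_map _ _
        rw [humap] at this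
        omega
      have hrest : (n + 1) * p - 1 ≤ Multiset.card (S - u) := by
        rw [Multiset.card_sub huS]
        have heq : (n + 1 + 1) * p = (n + 1) * p + p := by ring
        omega
      obtain ⟨L', hlen', hblocks', hsum'⟩ := ih (S - u) hrest
      set l := u.toList with hl
      have hlu : (↑l : Multiset G) = u := Multiset.coe_toList u
      refine ⟨l :: L', by simp [hlen'], ?_, ?_⟩
      · intro l' hl'
        rcases List.mem_cons.mp hl' with h | h
        · subst h
          constructor
          · intro h0
            rw [h0] at hlu
            rw [← hlu] at humap
            simp at humap
            exact htne humap.symm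
          · have heq : ((l.map f : List _) : Multiset _) = t := by
              rw [← humap, ← hlu]
              simp [Multiset.map_coe]
            calc (l.map f).sum = (((l.map f : List _) : Multiset _)).sum := by
                  rw [Multiset.sum_coe]
            _ = t.sum := by rw [heq]
            _ = 0 := htsum
        · exact hblocks' l' h
      · rw [List.map_cons, List.sum_cons, hlu]
        calc u + (L'.map (Multiset.ofList : List G → Multiset G)).sum ≤ u + (S - u) :=
              add_le_add_right hsum' u
        _ = S := by rw [add_comm]; exact tsub_add_cancel_of_le huS
end Extract

/-! ### Main theorem -/

theorem stmt2 (G : Type*) [Group G] [Finite G] (p : ℕ) (hp : p.Prime)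
    (H : Subgroup G) (hH : H.Normal)
    (hquot : Nonempty ((G ⧸ H) ≃*
      (Multiplicative (ZMod p) × Multiplicative (ZMod p)))) :
    smallDavenport G ≤ (smallDavenport H + 2) * p - 2 ∧
      (smallDavenport H + 2) * p - 2 ≤ Nat.card G / p + p - 2 := by
  classical
  haveI : Fact p.Prime := ⟨hp⟩
  haveI := hH
  have hp2 : 2 ≤ p := hp.two_le
  obtain ⟨e⟩ := hquot
  set d := smallDavenport H with hd
  -- the quotient map, additively
  set f : G → ZMod p × ZMod p :=
    fun x => ((e (QuotientGroup.mk x)).1.toAdd, (e (QuotientGroup.mk x)).2.toAdd) with hfdef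
  have hf : ∀ x y, f (x * y) = f x + f y := by
    intro x y
    simp only [hfdef]
    rw [show QuotientGroup.mk (x * y) = QuotientGroup.mk x * QuotientGroup.mk y from rfl,
      map_mul]
    rfl
  have hker : ∀ x, f x = 0 ↔ x ∈ H := by
    intro x
    simp only [hfdef]
    constructor
    · intro h
      rw [Prod.ext_iff] at h

      have h1 : e (QuotientGroup.mk x) = 1 := by
        have ha : Multiplicative.toAdd (e (QuotientGroup.mk x)).1 = 0 := h.1
        have hb : Multiplicative.toAdd (e (QuotientGroup.mk x)).2 = 0 := h.2
        rw [toAdd_eq_zero] at ha hb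
        exact Prod.ext ha hb
      have h2 : (QuotientGroup.mk x : G ⧸ H) = 1 := by
        apply e.injective
        rw [h1, map_one]
      exact (QuotientGroup.eq_one_iff x).mp h2
    · intro h
      have h2 : (QuotientGroup.mk x : G ⧸ H) = 1 := (QuotientGroup.eq_one_iff x).mpr h
      rw [h2, map_one]
      rfl
  -- main combinatorial bound
  have key : ∀ S : Multiset G, (∀ T ≤ S, T ≠ 0 → ¬ IsProductOne T) →
      Multiset.card S ≤ (d + 2) * p - 2 := by
    intro S hfree
    by_contra hcon
    push_neg at hcon
    have h4 : 2 * 2 ≤ (d + 2) * p := Nat.mul_le_mul (by omega) hp2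
    have hbig : (d + 1 + 1) * p - 1 ≤ Multiset.card S := by
      have : (d + 1 + 1) * p = (d + 2) * p := by ring
      omega
    obtain ⟨L, hLlen, hblocks, hLsum⟩ := extract_blocks hf (d + 1) S hbig
    have hmemH : ∀ l ∈ L, l.prod ∈ H := by
      intro l hl
      refine (hker _).mp ?_
      rw [← map_list_sum_eq hf]
      exact (hblocks l hl).2
    set hs : List ↥H := L.attach.map (fun x => (⟨x.1.prod, hmemH x.1 x.2⟩ : ↥H)) with hhs
    have hhslen : hs.length = d + 1 := by simp [hhs, hLlen]
    have hcardhs : smallDavenport ↥H < Multiset.card (↑hs : Multiset ↥H) := by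
      rw [Multiset.coe_card, hhslen]
      omega
    obtain ⟨W, hWle, hWne, hWpo⟩ := exists_productOne_of_lt (↑hs : Multiset ↥H) hcardhs
    obtain ⟨w, hwW, hwprod⟩ := hWpo
    set wG : List G := w.map (fun h : ↥H => (h : G)) with hwG
    have hwGprod : wG.prod = 1 := by
      have : wG.prod = H.subtype w.prod := (map_list_prod H.subtype w).symm
      rw [this, hwprod]
      rfl
    have hsmap : hs.map (fun h : ↥H => (h : G)) = L.map List.prod := by
      rw [hhs, List.map_map]
      exact List.attach_map_val
    have hWGle : (W.map (fun h : ↥H => (h : G))) ≤ (↑L : Multiset (List G)).map List.prod := by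
      have h5 : W.map (fun h : ↥H => (h : G)) ≤ (↑hs : Multiset ↥H).map (fun h : ↥H => (h : G)) :=
        Multiset.map_le_map hWle
      rwa [Multiset.map_coe, hsmap, ← Multiset.map_coe] at h5
    obtain ⟨Ls', hLs'le, hLs'map⟩ := exists_le_map' (↑L : Multiset (List G)) _ hWGle
    have hWGlist : W.map (fun h : ↥H => (h : G)) = (↑wG : Multiset G) := by
      rw [← hwW, Multiset.map_coe]
    obtain ⟨LL, hLLcoe, hLLmap⟩ := exists_list_map' wG Ls' (by rw [hLs'map, hWGlist])
    set u : List G := LL.flatten with hu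
    have huprod : u.prod = 1 := by
      rw [hu, List.prod_flatten, hLLmap, hwGprod]
    have hwne : w ≠ [] := by
      intro h0
      rw [h0] at hwW
      exact hWne (by rw [← hwW]; rfl)
    have hmemL : ∀ x ∈ LL, x ∈ L := by
      intro x hx
      have : x ∈ Ls' := by rw [← hLLcoe]; exact hx
      exact Multiset.mem_of_le hLs'le this
    have hune : u ≠ [] := by
      cases LL with
      | nil =>
        exfalso
        have h9 : w.map (fun h : ↥H => (h : G)) = [] := by rw [← hwG, ← hLLmap]; rfl
        cases w with
        | nil => exact hwne rfl
        | cons a as => simp at h9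
      | cons l0 rest =>
        have h6 : l0 ≠ [] := (hblocks l0 (hmemL l0 (by simp))).1
        rw [hu]
        simp only [List.flatten_cons]
        intro h0
        rcases List.append_eq_nil_iff.mp h0 with ⟨h7, _⟩
        exact h6 h7
    have hUle : (↑u : Multiset G) ≤ S := by
      rw [hu, coe_flatten_eq]
      have h8 : (LL.map (Multiset.ofList : List G → Multiset G)).sum
          = ((↑LL : Multiset (List G)).map (Multiset.ofList : List G → Multiset G)).sum := by
        rw [Multiset.map_coe, Multiset.sum_coe]
      rw [h8, hLLcoe]
      calc (Ls'.map (Multiset.ofList : List G → Multiset G)).sum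
          ≤ ((↑L : Multiset (List G)).map (Multiset.ofList : List G → Multiset G)).sum :=
            multiset_sum_le_sum (Multiset.map_le_map hLs'le)
      _ = (L.map (Multiset.ofList : List G → Multiset G)).sum := by
            rw [Multiset.map_coe, Multiset.sum_coe]
      _ ≤ S := hLsum
    exact hfree (↑u) hUle (by simpa using hune) ⟨u, rfl, huprod⟩
  constructor
  · refine csSup_le' ?_
    rintro n ⟨S, hc, hfreeS⟩
    exact hc ▸ key S hfreeS
  · have ha : d ≤ Nat.card ↥H - 1 := smallDavenport_le
    have ha1 : 1 ≤ Nat.card ↥H := Nat.card_pos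
    have hcg : Nat.card G = Nat.card (G ⧸ H) * Nat.card ↥H :=
      Subgroup.card_eq_card_quotient_mul_card_subgroup H
    have hq : Nat.card (G ⧸ H) = p * p := by
      rw [Nat.card_congr e.toEquiv, Nat.card_prod,
        Nat.card_congr Multiplicative.toAdd, Nat.card_zmod]
    have hdivp : Nat.card G / p = p * Nat.card ↥H := by
      rw [hcg, hq, mul_assoc]
      exact Nat.mul_div_cancel_left _ (by omega)
    rw [hdivp]
    have h1 : d + 2 ≤ Nat.card ↥H + 1 := by omega
    have h2 : (d + 2) * p ≤ (Nat.card ↥H + 1) * p := Nat.mul_le_mul_right p h1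
    have h3 : (Nat.card ↥H + 1) * p = p * Nat.card ↥H + p := by ring
    omega
end

section
/- Let p and q be primes with p dividing q−1, let G be a finite non-abelian group of order pq with commutator subgroup G' = [G,G] (so |G'| = q), let S be a sequence over G all of whose terms lie in G' \ {1}, and let x ∈ G \ G'. Then |π(x·S)| ≥ min{q, |S| + 1}, where x·S denotes the sequence S with the term x adjoined. -/
open Pointwise
open scoped commutatorElement

theorem auxCardCommutator (p q : ℕ) (hp : p.Prime) (hq : q.Prime) (hplt : p < q)
    (G : Type*) [Group G] [Finite G] (hG : Nat.card G = p * q)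
    (hna : ¬ ∀ a b : G, a * b = b * a) : Nat.card (commutator G) = q := by
  have hp2 := hp.two_le
  have hq2 := hq.two_le
  haveI fq := Fact.mk hq
  haveI fp := Fact.mk hp
  obtain ⟨Q⟩ : Nonempty (Sylow q G) := Sylow.nonempty
  have hfq : (Nat.card G).factorization q = 1 := by
    rw [hG, Nat.factorization_mul hp.ne_zero hq.ne_zero]
    simp [hp.factorization, hq.factorization, Finsupp.single_apply,
      (show p ≠ q by omega)]
  have hcardQ : Nat.card Q = q := by
    rw [Sylow.card_eq_multiplicity, hfq, pow_one]
  have hidx : (Q : Subgroup G).index = p := by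
    have h1 := Subgroup.card_mul_index (Q : Subgroup G)
    rw [hcardQ, hG, mul_comm p q] at h1
    exact Nat.eq_of_mul_eq_mul_left hq.pos h1
  have hn1 : Nat.card (Sylow q G) = 1 := by
    have hdvd : Nat.card (Sylow q G) ∣ p := hidx ▸ Sylow.card_dvd_index Q
    rcases hp.eq_one_or_self_of_dvd _ hdvd with h | h
    · exact h
    · exfalso
      have hmod := card_sylow_modEq_one q G
      rw [h] at hmod
      have hd := (Nat.modEq_iff_dvd' hp.one_lt.le).mp hmod.symm
      have := Nat.le_of_dvd (by omega) hd
      omega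
  haveI : Subsingleton (Sylow q G) := (Nat.card_eq_one_iff_unique.mp hn1).1
  haveI hQn : (Q : Subgroup G).Normal := by
    rw [← Subgroup.normalizer_eq_top_iff]
    rw [Subgroup.eq_top_iff']
    intro g
    exact Sylow.smul_eq_iff_mem_normalizer.mp (Subsingleton.elim _ _)
  have hle : commutator G ≤ (Q : Subgroup G) := by
    rw [commutator_def, Subgroup.commutator_le]
    intro g _ h _
    rw [← QuotientGroup.eq_one_iff]
    have hcardK : Nat.card (G ⧸ (Q : Subgroup G)) = p := by
      rw [← Subgroup.index_eq_card, hidx]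
    haveI : IsCyclic (G ⧸ (Q : Subgroup G)) := isCyclic_of_prime_card hcardK
    obtain ⟨gen, hgen⟩ := IsCyclic.exists_generator (α := G ⧸ (Q : Subgroup G))
    obtain ⟨m, hm⟩ := hgen ↑g
    obtain ⟨n, hn⟩ := hgen ↑h
    show (QuotientGroup.mk ⁅g, h⁆ : G ⧸ (Q : Subgroup G)) = 1
    rw [commutatorElement_def]
    have : (QuotientGroup.mk (g * h * g⁻¹ * h⁻¹) : G ⧸ (Q : Subgroup G))
        = (↑g * ↑h * (↑g)⁻¹ * (↑h)⁻¹ : G ⧸ (Q : Subgroup G)) := rfl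
    rw [this, ← hm, ← hn]
    group
  have hdvd : Nat.card (commutator G) ∣ q := hcardQ ▸ Subgroup.card_dvd_of_le hle
  rcases hq.eq_one_or_self_of_dvd _ hdvd with h | h
  · exfalso
    apply hna
    have hbot : commutator G = ⊥ := Subgroup.card_eq_one.mp h
    intro a b
    have hmem : ⁅a, b⁆ ∈ commutator G := by
      rw [commutator_def]
      exact Subgroup.commutator_mem_commutator (Subgroup.mem_top a) (Subgroup.mem_top b)
    rw [hbot, Subgroup.mem_bot] at hmem
    exact commutatorElement_eq_one_iff_commute.mp hmem
  · exact h

section Helpers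

variable {G : Type*} [Group G]

theorem prodSet_nonempty (S : Multiset G) : (prodSet S).Nonempty :=
  ⟨S.toList.prod, S.toList, by simp, rfl⟩

theorem mul_mem_prodSet_cons {a g : G} {S : Multiset G} (h : g ∈ prodSet S) :
    a * g ∈ prodSet (a ::ₘ S) := by
  obtain ⟨l, hl, rfl⟩ := h
  exact ⟨a :: l, by rw [← hl]; rfl, by simp⟩

theorem mem_prodSet_mul_cons {a g : G} {S : Multiset G} (h : g ∈ prodSet S) :
    g * a ∈ prodSet (a ::ₘ S) := by
  obtain ⟨l, hl, rfl⟩ := h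
  refine ⟨l ++ [a], ?_, by simp⟩
  have h1 : ((l ++ [a] : List G) : Multiset G) = (l : Multiset G) + ([a] : List G) := rfl
  rw [h1, hl]
  have : (([a] : List G) : Multiset G) = {a} := rfl
  rw [this, add_comm, Multiset.singleton_add]

theorem smul_set_eq_image (a : G) (s : Set G) : a • s = (a * ·) '' s := by
  ext y
  simp only [Set.mem_smul_set, Set.mem_image, smul_eq_mul]

end Helpers

theorem stmt8 (p q : ℕ) (hp : p.Prime) (hq : q.Prime) (hpq : p ∣ q - 1)
    (G : Type*) [Group G] [Finite G] (hG : Nat.card G = p * q)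
    (hna : ¬ ∀ a b : G, a * b = b * a)
    (S : Multiset G) (hS : ∀ g ∈ S, g ∈ commutator G ∧ g ≠ 1)
    (x : G) (hx : x ∉ commutator G) :
    min q (Multiset.card S + 1) ≤ (prodSet (x ::ₘ S)).ncard := by
  have hp2 := hp.two_le
  have hq2 := hq.two_le
  have hplt : p < q := by
    have := Nat.le_of_dvd (by omega) hpq
    omega
  have hcard : Nat.card (commutator G) = q := auxCardCommutator p q hp hq hplt G hG hna
  haveI fq := Fact.mk hq
  haveI fp := Fact.mk hp
  set N := commutator G with hN
  haveI : IsCyclic ↥N := isCyclic_of_prime_card hcard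
  -- elements of N commute
  have hcomm : ∀ a ∈ N, ∀ b ∈ N, a * b = b * a := by
    intro a ha b hb
    obtain ⟨g, hg⟩ := IsCyclic.exists_generator (α := ↥N)
    obtain ⟨m, hm⟩ := hg ⟨a, ha⟩
    obtain ⟨n, hn⟩ := hg ⟨b, hb⟩
    have ha2 : ((g : G)) ^ m = a := by simpa using Subtype.ext_iff.mp hm
    have hb2 : ((g : G)) ^ n = b := by simpa using Subtype.ext_iff.mp hn
    rw [← ha2, ← hb2]
    exact zpow_mul_comm _ _ _
  -- every nontrivial element of N generates N
  have hgen : ∀ d ∈ N, d ≠ 1 → Subgroup.zpowers d = N := by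
    intro d hd hd1
    have hle : Subgroup.zpowers d ≤ N := Subgroup.zpowers_le.mpr hd
    have hord : orderOf d = q := by
      have hdq : d ^ q = 1 := by
        have h1 : (⟨d, hd⟩ : ↥N) ^ q = 1 := by rw [← hcard]; exact pow_card_eq_one'
        simpa using Subtype.ext_iff.mp h1
      rcases hq.eq_one_or_self_of_dvd _ (orderOf_dvd_of_pow_eq_one hdq) with h | h
      · exact absurd (orderOf_eq_one_iff.mp h) hd1
      · exact h
    apply Subgroup.eq_of_le_of_card_ge hle
    rw [hcard, Nat.card_zpowers, hord]
  -- x does not commute with any nontrivial element of N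
  have hnc : ∀ a ∈ N, a ≠ 1 → ¬ Commute x a := by
    intro a ha ha1 hcx
    apply hna
    have hxall : ∀ c ∈ N, Commute x c := by
      intro c hc
      rw [← hgen a ha ha1] at hc
      obtain ⟨n, rfl⟩ := Subgroup.mem_zpowers_iff.mp hc
      exact hcx.zpow_right n
    have hidx : N.index = p := by
      have h1 := Subgroup.card_mul_index N
      rw [hcard, hG, mul_comm p q] at h1
      exact Nat.eq_of_mul_eq_mul_left hq.pos h1
    have hcardA : Nat.card (Abelianization G) = p := by
      rw [← hidx, Subgroup.index_eq_card]
      rfl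
    have hker : ∀ g : G, Abelianization.of g = 1 ↔ g ∈ N :=
      fun g => QuotientGroup.eq_one_iff g
    have hxt : Subgroup.zpowers (Abelianization.of x) = ⊤ := by
      apply Subgroup.eq_top_of_card_eq
      rw [Nat.card_zpowers, hcardA]
      apply orderOf_eq_prime
      · rw [← hcardA]; exact pow_card_eq_one'
      · exact fun h => hx ((hker x).mp h)
    have hdecomp : ∀ g : G, ∃ (c : G) (n : ℤ), c ∈ N ∧ g = c * x ^ n := by
      intro g
      have hmem : Abelianization.of g ∈ Subgroup.zpowers (Abelianization.of x) :=
        hxt ▸ Subgroup.mem_top _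
      obtain ⟨n, hn⟩ := Subgroup.mem_zpowers_iff.mp hmem
      refine ⟨g * (x ^ n)⁻¹, n, ?_, by group⟩
      rw [← hker]
      rw [map_mul, map_inv, map_zpow, hn, mul_inv_cancel]
    intro a' b'
    obtain ⟨c1, m, hc1, rfl⟩ := hdecomp a'
    obtain ⟨c2, n, hc2, rfl⟩ := hdecomp b'
    have h12 : Commute c1 c2 := hcomm c1 hc1 c2 hc2
    have hA : Commute c1 (c2 * x ^ n) :=
      h12.mul_right ((hxall c1 hc1).zpow_left n).symm
    have hB : Commute (x ^ m) (c2 * x ^ n) :=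
      ((hxall c2 hc2).zpow_left m).mul_right (Commute.zpow_zpow_self x m n)
    exact hA.mul_left hB
  -- products over x ::ₘ T lie in the coset of x
  have hcoset : ∀ (T : Multiset G), (∀ g ∈ T, g ∈ N) →
      ∀ g ∈ prodSet (x ::ₘ T), x⁻¹ * g ∈ N ∧ g * x⁻¹ ∈ N := by
    intro T hT g hg
    obtain ⟨l, hl, hprod⟩ := hg
    have hphi : Abelianization.of g = Abelianization.of x := by
      have h1 : Abelianization.of g = (l.map (Abelianization.of (G := G))).prod := by
        rw [← hprod, map_list_prod]
      have h2 : (l.map (Abelianization.of (G := G))).prod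
          = (Multiset.map (Abelianization.of (G := G)) (x ::ₘ T)).prod := by
        rw [← hl]
        rfl
      rw [Multiset.map_cons, Multiset.prod_cons] at h2
      have h3 : (Multiset.map (Abelianization.of (G := G)) T).prod = 1 := by
        apply Multiset.prod_eq_one
        intro z hz
        obtain ⟨s, hs, rfl⟩ := Multiset.mem_map.mp hz
        exact (QuotientGroup.eq_one_iff s).mpr (hT s hs)
      rw [h3, mul_one] at h2
      rw [h1, h2]
    constructor
    · have h4 : Abelianization.of (x⁻¹ * g) = 1 := by
        rw [map_mul, map_inv, hphi, inv_mul_cancel]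
      exact (QuotientGroup.eq_one_iff _).mp h4
    · have h4 : Abelianization.of (g * x⁻¹) = 1 := by
        rw [map_mul, map_inv, hphi, mul_inv_cancel]
      exact (QuotientGroup.eq_one_iff _).mp h4
  have main : ∀ (T : Multiset G), (∀ g ∈ T, g ∈ N ∧ g ≠ 1) →
      min q (Multiset.card T + 1) ≤ (prodSet (x ::ₘ T)).ncard := by
    intro T
    refine Multiset.induction_on T ?_ ?_
    · intro _
      have hxe : prodSet (x ::ₘ (0 : Multiset G)) = {x} := by
        ext g
        constructor
        · rintro ⟨l, hl, rfl⟩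
          have hl' : l = [x] := by
            rw [Multiset.cons_zero] at hl
            rwa [← Multiset.coe_singleton, Multiset.coe_eq_coe, List.perm_singleton] at hl
          simp [hl']
        · intro hg
          rw [Set.mem_singleton_iff] at hg
          exact ⟨[x], by simp, by simp [hg]⟩
      rw [hxe, Set.ncard_singleton]
      simp only [Multiset.card_zero]
      omega
    · intro a T ih hT
      have hTN : ∀ g ∈ T, g ∈ N ∧ g ≠ 1 := fun g hg => hT g (Multiset.mem_cons_of_mem hg)
      have hTN' : ∀ g ∈ T, g ∈ N := fun g hg => (hTN g hg).1
      have ha : a ∈ N := (hT a (Multiset.mem_cons_self a T)).1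
      have ha1 : a ≠ 1 := (hT a (Multiset.mem_cons_self a T)).2
      set P := prodSet (x ::ₘ T) with hP
      set P' := prodSet (x ::ₘ a ::ₘ T) with hP'
      have hsub1 : a • P ⊆ P' := by
        rw [smul_set_eq_image]
        rintro _ ⟨g, hg, rfl⟩
        have h0 := mul_mem_prodSet_cons (a := a) hg
        rwa [Multiset.cons_swap] at h0
      have hsub2 : (· * a) '' P ⊆ P' := by
        rintro _ ⟨g, hg, rfl⟩
        have h0 := mem_prodSet_mul_cons (a := a) hg
        rwa [Multiset.cons_swap] at h0
      set b := x * a * x⁻¹ with hb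
      have hbN : b ∈ N := Subgroup.Normal.conj_mem inferInstance a ha x
      have hba : b ≠ a := by
        intro h
        apply hnc a ha ha1
        show x * a = a * x
        calc x * a = (x * a * x⁻¹) * x := by group
          _ = a * x := by rw [← hb, h]
      have himg : (· * a) '' P = b • P := by
        rw [smul_set_eq_image]
        apply Set.image_congr
        intro g hg
        have hc : x⁻¹ * g ∈ N := (hcoset T hTN' g hg).1
        have key : (x⁻¹ * g) * a = a * (x⁻¹ * g) := hcomm _ hc a ha
        calc g * a = x * ((x⁻¹ * g) * a) := by group
          _ = x * (a * (x⁻¹ * g)) := by rw [key]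
          _ = b * g := by rw [hb]; group
      have hca : (a • P).ncard = P.ncard := by
        rw [smul_set_eq_image]
        exact Set.ncard_image_of_injective _ (mul_right_injective a)
      have hcb : (b • P).ncard = P.ncard := by
        rw [smul_set_eq_image]
        exact Set.ncard_image_of_injective _ (mul_right_injective b)
      have hcards : Multiset.card (a ::ₘ T) = Multiset.card T + 1 := Multiset.card_cons a T
      by_cases hcase : a • P = b • P
      · -- the set P is a full coset of N, of size q
        set d := a⁻¹ * b with hd
        have hdN : d ∈ N := N.mul_mem (N.inv_mem ha) hbN
        have hd1 : d ≠ 1 := by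
          rw [hd]
          intro h
          exact hba (inv_mul_eq_one.mp h).symm
        have hdP : d • P = P := by
          rw [hd, mul_smul, ← hcase, inv_smul_smul]
        set C := (· * x⁻¹) '' P with hC
        have hCN : C ⊆ (N : Set G) := by
          rintro _ ⟨g, hg, rfl⟩
          exact (hcoset T hTN' g hg).2
        have hdC : d • C = C := by
          rw [hC, smul_set_eq_image, ← Set.image_comp]
          have hfun : ((d * ·) ∘ (· * x⁻¹) : G → G) = (· * x⁻¹) ∘ (d * ·) := by
            funext g
            simp [mul_assoc]
          rw [hfun, Set.image_comp, ← smul_set_eq_image, hdP]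
        have hstab : ∀ c ∈ N, c • C = C := by
          intro c hc
          have hdm : d ∈ MulAction.stabilizer G C := MulAction.mem_stabilizer_iff.mpr hdC
          have hle : N ≤ MulAction.stabilizer G C := by
            rw [← hgen d hdN hd1]
            exact Subgroup.zpowers_le.mpr hdm
          exact MulAction.mem_stabilizer_iff.mp (hle hc)
        obtain ⟨g₀, hg₀⟩ := prodSet_nonempty (x ::ₘ T)
        have hc₀ : g₀ * x⁻¹ ∈ C := ⟨g₀, hg₀, rfl⟩
        have hCall : (N : Set G) ⊆ C := by
          intro g hg
          have h1 : g * (g₀ * x⁻¹)⁻¹ ∈ N := N.mul_mem hg (N.inv_mem (hCN hc₀))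
          rw [← hstab _ h1, Set.mem_smul_set]
          refine ⟨g₀ * x⁻¹, hc₀, ?_⟩
          rw [smul_eq_mul]
          group
        have hCeq : C = (N : Set G) := Set.Subset.antisymm hCN hCall
        have hPq : P.ncard = q := by
          have h1 : C.ncard = P.ncard := Set.ncard_image_of_injective _ (mul_left_injective x⁻¹)
          rw [← h1, hCeq, ← Nat.card_coe_set_eq]
          simpa using hcard
        have hfin : q ≤ P'.ncard := by
          have h2 := Set.ncard_le_ncard hsub1 (Set.toFinite _)
          omega
        exact le_trans (min_le_left _ _) hfin
      · have hnsub : ¬ (a • P ⊆ b • P) := by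
          intro hsub
          exact hcase (Set.eq_of_subset_of_ncard_le hsub (by rw [hca, hcb]) (Set.toFinite _))
        obtain ⟨t, htA, htB⟩ := Set.not_subset.mp hnsub
        have hins : insert t (b • P) ⊆ P' := by
          rw [Set.insert_subset_iff]
          refine ⟨hsub1 htA, ?_⟩
          rw [← himg]
          exact hsub2
        have hcins : (insert t (b • P)).ncard = P.ncard + 1 := by
          rw [Set.ncard_insert_of_notMem htB (Set.toFinite _), hcb]
        have h5 := Set.ncard_le_ncard hins (Set.toFinite _)
        have hIH := ih hTN
        rw [hcards]
        omega
  exact main S hS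
end

section
/- Let p and q be primes with p dividing q−1, let G be a finite non-abelian group of order pq with commutator subgroup G' = [G,G] (so |G'| = q), let S be a sequence over G all of whose terms lie in G' \ {1}, and let g₁, g₂ ∈ G \ G' be elements with g₁g₂ ∉ G'. Then |π(g₁·g₂·S)| ≥ min{q, 2|S| + 1}, where g₁·g₂·S denotes the sequence S with the terms g₁ and g₂ adjoined. -/
private lemma mul_comm_of_prime_card' {q : ℕ} (hq : q.Prime) {H : Type*} [Group H]
    (h : Nat.card H = q) : ∀ x y : H, x * y = y * x := by
  haveI : Fact q.Prime := ⟨hq⟩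
  haveI := isCyclic_of_prime_card h
  intro x y
  obtain ⟨g, hg⟩ := IsCyclic.exists_generator (α := H)
  obtain ⟨m, rfl⟩ := hg x
  obtain ⟨n, rfl⟩ := hg y
  rw [← zpow_add, ← zpow_add, add_comm]

open scoped commutatorElement in
private lemma commutator_card' {p q : ℕ} (hp : p.Prime) (hq : q.Prime) (hpq : p ∣ q - 1)
    {G : Type*} [Group G] [Finite G] (hG : Nat.card G = p * q)
    (hna : ¬ ∀ a b : G, a * b = b * a) : Nat.card (commutator G) = q := by
  haveI : Fact q.Prime := ⟨hq⟩
  have hq2 : 2 ≤ q := hq.two_le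
  have hp2 : 2 ≤ p := hp.two_le
  have hplt : p < q := by
    have h1 : 1 ≤ q - 1 := by
      rcases Nat.eq_or_lt_of_le hq2 with h | h
      · exfalso; rw [← h] at hpq; simp at hpq; exact hp.ne_one hpq
      · omega
    have := Nat.le_of_dvd (by omega) hpq
    omega
  obtain ⟨P⟩ : Nonempty (Sylow q G) := inferInstance
  have hfac : (Nat.card G).factorization q = 1 := by
    rw [hG, Nat.factorization_mul hp.pos.ne' hq.pos.ne']
    simp [hp.factorization, hq.factorization, Finsupp.single_apply, hplt.ne]
  have hcardP : Nat.card P = q := by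
    rw [Sylow.card_eq_multiplicity, hfac, pow_one]
  have hidx : (P : Subgroup G).index = p := by
    have h := Subgroup.card_mul_index (P : Subgroup G)
    rw [hcardP, hG] at h
    have : q * (P : Subgroup G).index = q * p := by linarith [h]
    exact Nat.eq_of_mul_eq_mul_left hq.pos this
  have hcs : Nat.card (Sylow q G) = 1 := by
    have hdvd : Nat.card (Sylow q G) ∣ p := hidx ▸ Sylow.card_dvd_index P
    rcases hp.eq_one_or_self_of_dvd _ hdvd with h | h
    · exact h
    · exfalso
      have hmod := card_sylow_modEq_one q G
      rw [h] at hmod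
      have : q ∣ p - 1 := (Nat.modEq_iff_dvd' hp.one_lt.le).mp hmod.symm
      have := Nat.le_of_dvd (by omega) this
      omega
  haveI : Subsingleton (Sylow q G) := (Nat.card_eq_one_iff_unique.mp hcs).1
  haveI hnorm : (P : Subgroup G).Normal := by
    rw [← Subgroup.normalizer_eq_top_iff, eq_top_iff]
    intro g _
    exact Sylow.smul_eq_iff_mem_normalizer.mp (Subsingleton.elim _ _)
  have hQcard : Nat.card (G ⧸ (P : Subgroup G)) = p := by
    rw [← Subgroup.index_eq_card]; exact hidx
  have hle : commutator G ≤ (P : Subgroup G) := by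
    rw [commutator_def, Subgroup.commutator_le]
    intro a _ b _
    rw [← QuotientGroup.eq_one_iff]
    have : ((⁅a, b⁆ : G) : G ⧸ (P : Subgroup G)) =
        ⁅(a : G ⧸ (P : Subgroup G)), (b : G ⧸ (P : Subgroup G))⁆ :=
      map_commutatorElement (QuotientGroup.mk' (P : Subgroup G)) a b
    rw [this]
    exact commutatorElement_eq_one_iff_mul_comm.mpr
      (mul_comm_of_prime_card' hp hQcard _ _)
  have hne : commutator G ≠ ⊥ := by
    intro h
    refine hna fun a b => ?_
    have hmem : ⁅a, b⁆ ∈ commutator G :=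
      Subgroup.commutator_mem_commutator (Subgroup.mem_top a) (Subgroup.mem_top b)
    rw [h, Subgroup.mem_bot] at hmem
    exact commutatorElement_eq_one_iff_mul_comm.mp hmem
  have hdvd : Nat.card (commutator G) ∣ q := hcardP ▸ Subgroup.card_dvd_of_le hle
  rcases hq.eq_one_or_self_of_dvd _ hdvd with h | h
  · exact absurd (Subgroup.card_eq_one.mp h) hne
  · exact h

private lemma conj_ne' {p q : ℕ} (hp : p.Prime) (hq : q.Prime)
    {G : Type*} [Group G] [Finite G] (hG : Nat.card G = p * q)
    (hna : ¬ ∀ a b : G, a * b = b * a)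
    (hN : Nat.card (commutator G) = q) {g s : G} (hg : g ∉ commutator G)
    (hs : s ∈ commutator G) (hs1 : s ≠ 1) : g * s * g⁻¹ ≠ s := by
  intro heq
  have hq2 := hq.two_le
  have hp2 := hp.two_le
  have hzle : Subgroup.zpowers s ≤ commutator G := Subgroup.zpowers_le.mpr hs
  have hzcard : Nat.card (Subgroup.zpowers s) = q := by
    have hdvd : Nat.card (Subgroup.zpowers s) ∣ q := hN ▸ Subgroup.card_dvd_of_le hzle
    rcases hq.eq_one_or_self_of_dvd _ hdvd with h | h
    · exact absurd (Subgroup.zpowers_eq_bot.mp (Subgroup.card_eq_one.mp h)) hs1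
    · exact h
  have hzeq : Subgroup.zpowers s = commutator G :=
    Subgroup.eq_of_le_of_card_ge hzle (by rw [hzcard, hN])
  set C := Subgroup.centralizer {s} with hC
  have hNle : commutator G ≤ C := by
    rw [← hzeq]
    intro x hx
    obtain ⟨k, rfl⟩ := Subgroup.mem_zpowers_iff.mp hx
    refine Subgroup.mem_centralizer_iff.mpr ?_
    intro y hy
    rw [Set.mem_singleton_iff] at hy
    rw [hy]
    exact ((Commute.refl s).zpow_right k).eq
  have hgs : g * s = s * g := by
    conv_rhs => rw [← heq]
    group
  have hgC : g ∈ C := by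
    refine Subgroup.mem_centralizer_iff.mpr ?_
    intro y hy
    rw [Set.mem_singleton_iff] at hy
    rw [hy]; exact hgs.symm
  have hCcard : Nat.card C ∣ p * q := hG ▸ Subgroup.card_subgroup_dvd_card C
  have hqC : q ∣ Nat.card C := hN ▸ Subgroup.card_dvd_of_le hNle
  have hCne : Nat.card C ≠ q := by
    intro h
    have heqC : commutator G = C := Subgroup.eq_of_le_of_card_ge hNle (by rw [h, hN])
    exact hg (heqC ▸ hgC)
  obtain ⟨d, hd⟩ := hqC
  have hdp : d ∣ p := by
    have : q * d ∣ q * p := by rw [← hd, Nat.mul_comm q p]; exact hCcard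
    exact (Nat.mul_dvd_mul_iff_left hq.pos).mp this
  have hCeq : Nat.card C = p * q := by
    rcases hp.eq_one_or_self_of_dvd _ hdp with h | h
    · exfalso; apply hCne; rw [hd, h, Nat.mul_one]
    · rw [hd, h, Nat.mul_comm]
  have hCtop : C = ⊤ := Subgroup.eq_top_of_card_eq _ (by rw [hCeq, hG])
  have hscenter : s ∈ Subgroup.center G := by
    refine Subgroup.mem_center_iff.mpr fun x => ?_
    have hx : x ∈ C := hCtop ▸ Subgroup.mem_top x
    exact (Subgroup.mem_centralizer_iff.mp hx s (Set.mem_singleton s)).symm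
  have hNcenter : commutator G ≤ Subgroup.center G := by
    rw [← hzeq]; exact Subgroup.zpowers_le.mpr hscenter
  haveI : Fact p.Prime := ⟨hp⟩
  have hQcard : Nat.card (G ⧸ commutator G) = p := by
    have h := Subgroup.card_mul_index (commutator G)
    rw [hN, hG, Subgroup.index_eq_card] at h
    have : q * Nat.card (G ⧸ commutator G) = q * p := by linarith [h]
    exact Nat.eq_of_mul_eq_mul_left hq.pos this
  haveI := isCyclic_of_prime_card hQcard
  exact hna fun a b =>
    (commGroupOfCyclicCenterQuotient (QuotientGroup.mk' (commutator G))
      (by rw [QuotientGroup.ker_mk']; exact hNcenter)).mul_comm a b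

open scoped Pointwise in
private lemma set_cd {q : ℕ} (hq : q.Prime) {H : Type*} [Group H] [Finite H]
    (hH : Nat.card H = q) {s t : Set H} (hs : s.Nonempty) (ht : t.Nonempty) :
    min q (s.ncard + t.ncard - 1) ≤ (s * t).ncard := by
  classical
  have hmin : (q : ℕ∞) ≤ Monoid.minOrder H := by
    refine Monoid.le_minOrder.mpr fun a ha _ => ?_
    have hdvd : orderOf a ∣ q := hH ▸ orderOf_dvd_natCard a
    rcases hq.eq_one_or_self_of_dvd _ hdvd with h | h
    · exact absurd (orderOf_eq_one_iff.mp h) ha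
    · exact le_of_eq (by rw [h])
  have hsf : s.Finite := Set.toFinite s
  have htf : t.Finite := Set.toFinite t
  have hstf : (s * t).Finite := Set.toFinite _
  have hcd := cauchy_davenport_minOrder_mul (α := H)
    (s := hsf.toFinset) (t := htf.toFinset)
    (hsf.toFinset_nonempty.mpr hs) (htf.toFinset_nonempty.mpr ht)
  rw [← Set.Finite.toFinset_mul hsf htf hstf] at hcd
  have key : ((min q (s.ncard + t.ncard - 1) : ℕ) : ℕ∞) ≤ (((s * t).ncard : ℕ) : ℕ∞) := by
    rw [Set.ncard_eq_toFinset_card _ hsf, Set.ncard_eq_toFinset_card _ htf,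
      Set.ncard_eq_toFinset_card _ hstf]
    refine le_trans (le_trans ?_ (min_le_min hmin (le_refl _))) hcd
    refine le_min ?_ ?_
    · exact_mod_cast min_le_left _ _
    · exact_mod_cast min_le_right _ _
  exact_mod_cast key

private def triSet {H : Type*} [Group H] (φ ψ : H →* H) (T : Multiset H) : Set H :=
  {x | ∃ a b c : List H, ((a ++ b ++ c : List H) : Multiset H) = T ∧
    φ a.prod * ψ b.prod * c.prod = x}

open scoped Pointwise in
private lemma triSet_card {q : ℕ} (hq : q.Prime) {H : Type*} [Group H] [Finite H]
    (hH : Nat.card H = q) (hcomm : ∀ x y : H, x * y = y * x) (φ ψ : H →* H)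
    (h1 : ∀ s : H, s ≠ 1 → φ s ≠ s) (h2 : ∀ s : H, s ≠ 1 → ψ s ≠ s)
    (h3 : ∀ s : H, s ≠ 1 → φ s ≠ ψ s) :
    ∀ T : Multiset H, (∀ s ∈ T, s ≠ 1) →
      min q (2 * Multiset.card T + 1) ≤ (triSet φ ψ T).ncard := by
  intro T
  induction T using Multiset.induction with
  | empty =>
    intro _
    have h1m : (1 : H) ∈ triSet φ ψ 0 := ⟨[], [], [], by simp, by simp⟩
    have hpos : 0 < (triSet φ ψ 0).ncard :=
      (Set.ncard_pos (Set.toFinite _)).mpr ⟨1, h1m⟩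
    have hle := min_le_right q (2 * Multiset.card (0 : Multiset H) + 1)
    simp only [Multiset.card_zero, Nat.mul_zero, Nat.zero_add] at hle ⊢
    omega
  | cons s T ih =>
    intro hT
    have hs1 : s ≠ 1 := hT s (Multiset.mem_cons_self s T)
    have hT' : ∀ x ∈ T, x ≠ 1 := fun x hx => hT x (Multiset.mem_cons_of_mem hx)
    have ihm := ih hT'
    have hsub : ({φ s, ψ s, s} : Set H) * triSet φ ψ T ⊆ triSet φ ψ (s ::ₘ T) := by
      rintro x ⟨d, hd, y, hy, rfl⟩
      obtain ⟨a, b, c, habc, rfl⟩ := hy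
      simp only [Set.mem_insert_iff, Set.mem_singleton_iff] at hd
      rcases hd with h | h | h <;> rw [h]
      · refine ⟨s :: a, b, c, ?_, ?_⟩
        · show ((s :: (a ++ b ++ c) : List H) : Multiset H) = s ::ₘ T
          rw [← habc]; rfl
        · show φ (s :: a).prod * ψ b.prod * c.prod =
            φ s * (φ a.prod * ψ b.prod * c.prod)
          simp only [List.prod_cons, map_mul, mul_assoc]
      · refine ⟨a, s :: b, c, ?_, ?_⟩
        · show ((a ++ s :: b ++ c : List H) : Multiset H) = s ::ₘ T
          rw [← habc, Multiset.cons_coe, Multiset.coe_eq_coe, List.append_assoc,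
            List.append_assoc]
          exact List.perm_middle
        · show φ a.prod * ψ (s :: b).prod * c.prod =
            ψ s * (φ a.prod * ψ b.prod * c.prod)
          simp only [List.prod_cons, map_mul, mul_assoc]
          rw [← mul_assoc (φ a.prod) (ψ s), hcomm (φ a.prod) (ψ s), mul_assoc]
      · refine ⟨a, b, s :: c, ?_, ?_⟩
        · show ((a ++ b ++ s :: c : List H) : Multiset H) = s ::ₘ T
          rw [← habc, Multiset.cons_coe, Multiset.coe_eq_coe]
          exact List.perm_middle
        · show φ a.prod * ψ b.prod * (s :: c).prod =
            s * (φ a.prod * ψ b.prod * c.prod)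
          have e1 : ψ b.prod * (s * c.prod) = s * (ψ b.prod * c.prod) := by
            rw [← mul_assoc, hcomm (ψ b.prod) s, mul_assoc]
          have e2 : φ a.prod * (s * (ψ b.prod * c.prod)) =
              s * (φ a.prod * (ψ b.prod * c.prod)) := by
            rw [← mul_assoc, hcomm (φ a.prod) s, mul_assoc]
          simp only [List.prod_cons, mul_assoc, e1, e2]
    have hne : (triSet φ ψ T).Nonempty :=
      ⟨φ T.toList.prod, T.toList, [], [], by simp [Multiset.coe_toList], by simp⟩
    have hd3 : ({φ s, ψ s, s} : Set H).ncard = 3 := by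
      rw [Set.ncard_insert_of_notMem (by simp [h1 s hs1, h3 s hs1]) (Set.toFinite _),
        Set.ncard_insert_of_notMem (by simp [h2 s hs1]) (Set.toFinite _),
        Set.ncard_singleton]
    have hcd := set_cd hq hH (s := ({φ s, ψ s, s} : Set H)) (t := triSet φ ψ T)
      ⟨φ s, by simp⟩ hne
    rw [hd3] at hcd
    have hmono : (({φ s, ψ s, s} : Set H) * triSet φ ψ T).ncard ≤
        (triSet φ ψ (s ::ₘ T)).ncard :=
      Set.ncard_le_ncard hsub (Set.toFinite _)
    simp only [Multiset.card_cons]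
    omega

theorem stmt9 (p q : ℕ) (hp : p.Prime) (hq : q.Prime) (hpq : p ∣ q - 1)
    (G : Type*) [Group G] [Finite G] (hG : Nat.card G = p * q)
    (hna : ¬ ∀ a b : G, a * b = b * a)
    (S : Multiset G) (hS : ∀ g ∈ S, g ∈ commutator G ∧ g ≠ 1)
    (g₁ g₂ : G) (hg₁ : g₁ ∉ commutator G) (hg₂ : g₂ ∉ commutator G)
    (hg₁g₂ : g₁ * g₂ ∉ commutator G) :
    min q (2 * Multiset.card S + 1) ≤ (prodSet (g₁ ::ₘ g₂ ::ₘ S)).ncard := by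
  haveI : Fact q.Prime := ⟨hq⟩
  have hN : Nat.card (commutator G) = q := commutator_card' hp hq hpq hG hna
  have hcomm : ∀ x y : ↥(commutator G), x * y = y * x := mul_comm_of_prime_card' hq hN
  set N := commutator G with hNdef
  let φ : ↥N →* ↥N := (MulAut.conjNormal ((g₁ * g₂)⁻¹) : MulAut ↥N).toMonoidHom
  let ψ : ↥N →* ↥N := (MulAut.conjNormal (g₂⁻¹) : MulAut ↥N).toMonoidHom
  have hφcoe : ∀ x : ↥N, ((φ x : ↥N) : G) = (g₁ * g₂)⁻¹ * ↑x * ((g₁ * g₂)⁻¹)⁻¹ :=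
    fun x => MulAut.conjNormal_apply _ x
  have hψcoe : ∀ x : ↥N, ((ψ x : ↥N) : G) = g₂⁻¹ * ↑x * (g₂⁻¹)⁻¹ :=
    fun x => MulAut.conjNormal_apply _ x
  have hcoe_ne : ∀ x : ↥N, x ≠ 1 → ((x : ↥N) : G) ≠ 1 := by
    intro x hx h
    exact hx (Subtype.ext h)
  have h1 : ∀ s : ↥N, s ≠ 1 → φ s ≠ s := by
    intro s hs heq
    have hmem : (g₁ * g₂)⁻¹ ∉ N := fun hu => hg₁g₂ (inv_mem_iff.mp hu)
    refine conj_ne' hp hq hG hna hN hmem s.2 (hcoe_ne s hs) ?_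
    rw [← hφcoe s, heq]
  have h2 : ∀ s : ↥N, s ≠ 1 → ψ s ≠ s := by
    intro s hs heq
    have hmem : g₂⁻¹ ∉ N := fun hu => hg₂ (inv_mem_iff.mp hu)
    refine conj_ne' hp hq hG hna hN hmem s.2 (hcoe_ne s hs) ?_
    rw [← hψcoe s, heq]
  have h3 : ∀ s : ↥N, s ≠ 1 → φ s ≠ ψ s := by
    intro s hs heq
    have hmem : g₁⁻¹ ∉ N := fun hu => hg₁ (inv_mem_iff.mp hu)
    refine conj_ne' hp hq hG hna hN hmem s.2 (hcoe_ne s hs) ?_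
    have hc : (g₁ * g₂)⁻¹ * ↑s * ((g₁ * g₂)⁻¹)⁻¹ = g₂⁻¹ * (s : G) * (g₂⁻¹)⁻¹ := by
      rw [← hφcoe s, ← hψcoe s, heq]
    calc g₁⁻¹ * (s : G) * (g₁⁻¹)⁻¹
        = g₂ * ((g₁ * g₂)⁻¹ * ↑s * ((g₁ * g₂)⁻¹)⁻¹) * g₂⁻¹ := by group
      _ = g₂ * (g₂⁻¹ * (s : G) * (g₂⁻¹)⁻¹) * g₂⁻¹ := by rw [hc]
      _ = ↑s := by group
  let T : Multiset ↥N := S.pmap (fun g h => (⟨g, h⟩ : ↥N)) (fun g hg => (hS g hg).1)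
  have hT : ∀ x ∈ T, x ≠ 1 := by
    intro x hx
    obtain ⟨g, hg, rfl⟩ := Multiset.mem_pmap.mp hx
    exact fun h => (hS g hg).2 (congrArg Subtype.val h)
  have hTcard : Multiset.card T = Multiset.card S := Multiset.card_pmap _ _ _
  have hTS : T.map (fun y : ↥N => (y : G)) = S := by
    show (S.pmap (fun g h => (⟨g, h⟩ : ↥N)) _).map (fun y : ↥N => (y : G)) = S
    rw [Multiset.map_pmap]
    exact (Multiset.pmap_eq_map _ _ _ _).trans (Multiset.map_id S)
  have hkey := triSet_card hq hN hcomm φ ψ h1 h2 h3 T hT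
  have hsubset : (fun x : ↥N => g₁ * g₂ * (x : G)) '' triSet φ ψ T ⊆
      prodSet (g₁ ::ₘ g₂ ::ₘ S) := by
    rintro _ ⟨x, hx, rfl⟩
    obtain ⟨a, b, c, habc, hval⟩ := hx
    subst hval
    refine ⟨(a.map (fun y : ↥N => (y : G))) ++
      g₁ :: ((b.map (fun y : ↥N => (y : G))) ++ g₂ :: (c.map (fun y : ↥N => (y : G)))), ?_, ?_⟩
    · have hmapped : ((a.map (fun y : ↥N => (y : G)) ++ b.map (fun y : ↥N => (y : G)) ++
          c.map (fun y : ↥N => (y : G)) : List G) : Multiset G) = S := by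
        have h := congrArg (Multiset.map (fun y : ↥N => (y : G))) habc
        rw [Multiset.map_coe, hTS, List.map_append, List.map_append] at h
        exact h
      rw [← hmapped, Multiset.cons_coe, Multiset.cons_coe, Multiset.coe_eq_coe]
      refine List.Perm.trans List.perm_middle ?_
      refine List.Perm.cons g₁ ?_
      rw [← List.append_assoc]
      exact List.perm_middle
    · have hpl : ∀ l : List ↥N, (List.map (fun y : ↥N => (y : G)) l).prod =
          ((l.prod : ↥N) : G) := by
        intro l
        simpa only [Subgroup.coe_subtype] using (map_list_prod N.subtype l).symm
      rw [List.prod_append, List.prod_cons, List.prod_append, List.prod_cons, hpl, hpl, hpl]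
      show _ = g₁ * g₂ * ((φ a.prod * ψ b.prod * c.prod : ↥N) : G)
      simp only [Subgroup.coe_mul, hφcoe, hψcoe]
      group
  have hinj : Function.Injective (fun x : ↥N => g₁ * g₂ * (x : G)) := by
    intro x y h
    exact Subtype.ext (mul_left_cancel h)
  calc min q (2 * Multiset.card S + 1)
      = min q (2 * Multiset.card T + 1) := by rw [hTcard]
    _ ≤ (triSet φ ψ T).ncard := hkey
    _ = ((fun x : ↥N => g₁ * g₂ * (x : G)) '' triSet φ ψ T).ncard :=
        (Set.ncard_image_of_injective _ hinj).symm
    _ ≤ (prodSet (g₁ ::ₘ g₂ ::ₘ S)).ncard :=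
        Set.ncard_le_ncard hsubset (Set.toFinite _)
end

section
/- Let p and q be primes with p dividing q−1, let G be a finite non-abelian group of order pq with commutator subgroup G' = [G,G] (so |G'| = q), and let S be a sequence over G with π(S) ⊆ G' and |S| ≥ q. Then 1 ∈ Π(S), i.e. S has a nontrivial product-one subsequence. -/
section Aux

set_option linter.unusedSectionVars false
set_option maxHeartbeats 1000000

open Subgroup
open scoped Pointwise
open scoped commutatorElement

section Basics
variable {G : Type*} [Group G]

lemma card_list_sum : ∀ L : List (Multiset G), Multiset.card L.sum = (L.map Multiset.card).sum := by
  intro L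
  induction L with
  | nil => simp
  | cons B L ih => simp [ih]

lemma mem_le_sum {B : Multiset G} : ∀ {L : List (Multiset G)}, B ∈ L → B ≤ L.sum := by
  intro L hB
  induction L with
  | nil => simp at hB
  | cons C L ih =>
    rcases List.mem_cons.mp hB with h | h
    · subst h; exact Multiset.le_add_right _ _
    · exact le_trans (ih h) (Multiset.le_add_left _ _)

end Basics

section GT
variable {G : Type*} [Group G] [Finite G]


lemma divisors_pq {p q d : ℕ} (hp : p.Prime) (hq : q.Prime) (hd : d ∣ p * q) :
    d = 1 ∨ d = p ∨ d = q ∨ d = p * q := by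
  by_cases hpd : p ∣ d
  · obtain ⟨e, rfl⟩ := hpd
    have he : e ∣ q := (mul_dvd_mul_iff_left (a := p) hp.pos.ne').mp hd
    rcases (Nat.Prime.eq_one_or_self_of_dvd hq e he) with h | h <;> subst h <;> simp
  · have hcop : Nat.Coprime d p := (Nat.coprime_comm.mp ((Nat.Prime.coprime_iff_not_dvd hp).mpr hpd))
    have : d ∣ q := (Nat.Coprime.dvd_of_dvd_mul_left hcop hd)
    rcases (Nat.Prime.eq_one_or_self_of_dvd hq d this) with h | h <;> simp [h]

lemma p_lt_q {p q : ℕ} (hp : p.Prime) (hq : q.Prime) (hpq : p ∣ q - 1) : p < q := by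
  have h2 : 2 ≤ q := hq.two_le
  have h0 : q - 1 ≠ 0 := by omega
  have := Nat.le_of_dvd (Nat.pos_of_ne_zero h0) hpq
  have hp2 := hp.two_le
  omega

lemma card_commutator_eq {p q : ℕ} (hp : p.Prime) (hq : q.Prime) (hpq : p ∣ q - 1)
    (hG : Nat.card G = p * q) (hna : ¬ ∀ a b : G, a * b = b * a) :
    Nat.card (commutator G) = q := by
  haveI : Fact p.Prime := ⟨hp⟩
  haveI : Fact q.Prime := ⟨hq⟩
  have hplt : p < q := p_lt_q hp hq hpq
  have hpq' : p ≠ q := hplt.ne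
  obtain ⟨Q⟩ : Nonempty (Sylow q G) := Sylow.nonempty
  have hfact : (Nat.card G).factorization q = 1 := by
    rw [hG, Nat.factorization_mul hp.pos.ne' hq.pos.ne']
    simp [hp.factorization, hq.factorization, Finsupp.single_apply, hpq']
  have hQcard : Nat.card Q = q := by
    rw [Sylow.card_eq_multiplicity, hfact, pow_one]
  have hQindex : (Q : Subgroup G).index = p := by
    have h := Subgroup.card_mul_index (Q : Subgroup G)
    rw [hQcard, hG] at h
    have : q * (Q : Subgroup G).index = q * p := by rw [h]; ring
    exact Nat.eq_of_mul_eq_mul_left hq.pos this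
  have hn1 : Nat.card (Sylow q G) = 1 := by
    have hdvd : Nat.card (Sylow q G) ∣ p := hQindex ▸ Sylow.card_dvd_index Q
    rcases hp.eq_one_or_self_of_dvd _ hdvd with h | h
    · exact h
    · exfalso
      have hmod := card_sylow_modEq_one q G
      rw [h] at hmod
      have : p % q = 1 % q := hmod
      rw [Nat.mod_eq_of_lt hplt, Nat.mod_eq_of_lt hq.one_lt] at this
      exact hp.one_lt.ne' this
  haveI : Subsingleton (Sylow q G) := (Nat.card_eq_one_iff_unique.mp hn1).1
  have hQnormal : (Q : Subgroup G).Normal := by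
    rw [← Subgroup.normalizer_eq_top_iff, eq_top_iff']
    intro g
    exact Sylow.smul_eq_iff_mem_normalizer.mp (Subsingleton.elim _ _)
  have hcyc : IsCyclic (G ⧸ (Q : Subgroup G)) := by
    apply isCyclic_of_prime_card (p := p)
    rw [← Subgroup.index_eq_card, hQindex]
  letI := hcyc.commGroup
  have hle : commutator G ≤ (Q : Subgroup G) := by
    rw [_root_.commutator_def, Subgroup.commutator_le]
    intro a _ b _
    apply (QuotientGroup.eq_one_iff _).mp
    show ((QuotientGroup.mk' (Q : Subgroup G)) ⁅a, b⁆ : G ⧸ (Q : Subgroup G)) = 1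
    rw [map_commutatorElement]
    exact commutatorElement_eq_one_iff_mul_comm.mpr (mul_comm _ _)
  have hbotne : commutator G ≠ ⊥ := by
    intro h
    apply hna
    intro a b
    have hmem : (⁅a, b⁆ : G) ∈ _root_.commutator G := by
      rw [_root_.commutator_def]
      exact commutator_mem_commutator (mem_top a) (mem_top b)
    rw [h, Subgroup.mem_bot] at hmem
    exact commutatorElement_eq_one_iff_mul_comm.mp hmem
  have hdvd : Nat.card (commutator G) ∣ q := hQcard ▸ Subgroup.card_dvd_of_le hle
  rcases hq.eq_one_or_self_of_dvd _ hdvd with h | h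
  · exact absurd (Subgroup.card_eq_one.mp h) hbotne
  · exact h

lemma centralizer_mem {p q : ℕ} (hp : p.Prime) (hq : q.Prime) (hpq : p ∣ q - 1)
    (hG : Nat.card G = p * q) (hna : ¬ ∀ a b : G, a * b = b * a)
    (hNq : Nat.card (commutator G) = q) :
    ∀ P : G, P ∈ commutator G → P ≠ 1 → ∀ u : G, u * P = P * u → u ∈ commutator G := by
  haveI : Fact p.Prime := ⟨hp⟩
  haveI : Fact q.Prime := ⟨hq⟩
  have hplt : p < q := p_lt_q hp hq hpq
  intro P hP hP1 u hu
  have horder : orderOf P = q := by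
    have h1 : orderOf (⟨P, hP⟩ : commutator G) ∣ q := hNq ▸ orderOf_dvd_natCard _
    rw [Subgroup.orderOf_mk] at h1
    rcases hq.eq_one_or_self_of_dvd _ h1 with h | h
    · exact absurd (orderOf_eq_one_iff.mp h) hP1
    · exact h
  have hzp : Nat.card (zpowers P) = q := by rw [Nat.card_zpowers, horder]
  have hzpN : zpowers P ≤ commutator G := zpowers_le.mpr hP
  have hzpEq : zpowers P = commutator G :=
    Subgroup.eq_of_le_of_card_ge hzpN (by rw [hNq, hzp])
  set C := Subgroup.centralizer {P} with hC
  have hzC : zpowers P ≤ C := by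
    apply zpowers_le.mpr
    apply Subgroup.mem_centralizer_iff.mpr
    intro h hh
    rw [Set.mem_singleton_iff] at hh
    subst hh
    rfl
  have huC : u ∈ C := by
    apply Subgroup.mem_centralizer_iff.mpr
    intro h hh
    rw [Set.mem_singleton_iff] at hh
    subst hh
    exact hu.symm
  have hqC : q ∣ Nat.card C := hzp ▸ Subgroup.card_dvd_of_le hzC
  have hCpq : Nat.card C ∣ p * q := hG ▸ Subgroup.card_subgroup_dvd_card C
  have hCne : Nat.card C ≠ p * q := by
    intro hcard
    have hCtop : C = ⊤ := Subgroup.eq_top_of_card_eq _ (by rw [hcard, hG])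
    have hPcenter : P ∈ Subgroup.center G := by
      rw [Subgroup.mem_center_iff]
      intro g
      have hg : g ∈ C := hCtop ▸ mem_top g
      exact (Subgroup.mem_centralizer_iff.mp hg P (Set.mem_singleton P)).symm
    have hZ1 : Nat.card (center G) ≠ 1 := by
      intro h
      exact hP1 (by rwa [Subgroup.card_eq_one.mp h, Subgroup.mem_bot] at hPcenter)
    have hZd : Nat.card (center G) * (center G).index = p * q := by
      rw [Subgroup.card_mul_index, hG]
    have hdd : (center G).index ∣ p * q := Dvd.intro_left _ hZd
    have hdne : (center G).index ≠ p * q := by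
      intro h
      rw [h] at hZd
      have hpq0 : 0 < p * q := Nat.mul_pos hp.pos hq.pos
      have : Nat.card (center G) = 1 := by
        nlinarith [Nat.card_pos (α := center G)]
      exact hZ1 this
    have hcyc : IsCyclic (G ⧸ center G) := by
      rcases divisors_pq hp hq hdd with h | h | h | h
      · haveI : Subsingleton (G ⧸ center G) := by
          apply (Nat.card_eq_one_iff_unique.mp _).1
          rw [← Subgroup.index_eq_card, h]
        infer_instance
      · exact isCyclic_of_prime_card (p := p) (by rw [← Subgroup.index_eq_card, h])
      · exact isCyclic_of_prime_card (p := q) (by rw [← Subgroup.index_eq_card, h])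
      · exact absurd h hdne
    letI := hcyc
    exact hna fun a b =>
      (commGroupOfCyclicCenterQuotient (QuotientGroup.mk' (center G))
        (by rw [QuotientGroup.ker_mk'])).mul_comm a b
  have hCq : Nat.card C = q := by
    rcases divisors_pq hp hq hCpq with h | h | h | h
    · exact absurd (Nat.eq_one_of_dvd_one (h ▸ hqC)) hq.one_lt.ne'
    · exfalso
      have := Nat.le_of_dvd hp.pos (h ▸ hqC)
      omega
    · exact h
    · exact absurd h hCne
  have hCeq : zpowers P = C := Subgroup.eq_of_le_of_card_ge hzC (by rw [hCq, hzp])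
  rw [← hzpEq, hCeq]
  exact huC

end GT

section Comb
variable {G : Type*} [Group G]

lemma prodSet_add {S T : Multiset G} {x y : G} (hx : x ∈ prodSet S) (hy : y ∈ prodSet T) :
    x * y ∈ prodSet (S + T) := by
  obtain ⟨l, hl, rfl⟩ := hx
  obtain ⟨m, hm, rfl⟩ := hy
  exact ⟨l ++ m, by rw [← Multiset.coe_add, hl, hm], by simp⟩

lemma exists_blocks : ∀ M : Multiset G, (M.map Abelianization.of).prod = 1 →
    ∃ L : List (Multiset G), L.sum = M ∧ ∀ B ∈ L, B ≠ 0 ∧ (B.map Abelianization.of).prod = 1 ∧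
      ∀ B' ≤ B, B' ≠ 0 → (B'.map Abelianization.of).prod = 1 → B' = B := by
  intro M
  induction M using Multiset.strongInductionOn with
  | _ M ih =>
    intro hM
    rcases eq_or_ne M 0 with rfl | hM0
    · exact ⟨[], by simp, by simp⟩
    · classical
      have hex : ∃ n, ∃ B : Multiset G, B ≤ M ∧ B ≠ 0 ∧ (B.map Abelianization.of).prod = 1 ∧
          Multiset.card B = n := ⟨Multiset.card M, M, le_rfl, hM0, hM, rfl⟩
      obtain ⟨B, hBM, hB0, hB1, hBn⟩ := Nat.find_spec hex
      have hmin : ∀ B' ≤ B, B' ≠ 0 → (B'.map Abelianization.of).prod = 1 → B' = B := by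
        intro B' hB' hB'0 hB'1
        have hge : Nat.find hex ≤ Multiset.card B' :=
          Nat.find_min' hex ⟨B', le_trans hB' hBM, hB'0, hB'1, rfl⟩
        exact Multiset.eq_of_le_of_card_le hB' (by omega)
      have hrest : M - B < M := by
        apply lt_of_le_of_ne (tsub_le_self)
        intro h
        have hcb : 0 < Multiset.card B := Multiset.card_pos.mpr hB0
        have hle : Multiset.card B ≤ Multiset.card M := Multiset.card_le_card hBM
        have := congrArg Multiset.card h
        rw [Multiset.card_sub hBM] at this
        omega
      have hsum : M - B + B = M := tsub_add_cancel_of_le hBM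
      have hrest1 : ((M - B).map Abelianization.of).prod = 1 := by
        have : ((M - B).map Abelianization.of).prod * (B.map Abelianization.of).prod = 1 := by
          rw [← Multiset.prod_add, ← Multiset.map_add, hsum, hM]
        rwa [hB1, mul_one] at this
      obtain ⟨L, hLsum, hLprop⟩ := ih (M - B) hrest hrest1
      refine ⟨B :: L, ?_, ?_⟩
      · rw [List.sum_cons, hLsum, add_comm, hsum]
      · intro C hC
        rcases List.mem_cons.mp hC with h | h
        · subst h; exact ⟨hB0, hB1, hmin⟩
        · exact hLprop C h

lemma block_values
    (hcent : ∀ P : G, P ∈ commutator G → P ≠ 1 → ∀ u : G, u * P = P * u → u ∈ commutator G)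
    (B : Multiset G) (hB0 : B ≠ 0) (hB1 : (B.map Abelianization.of).prod = 1)
    (hmin : ∀ B' ≤ B, B' ≠ 0 → (B'.map Abelianization.of).prod = 1 → B' = B)
    (hnot1 : ¬ IsProductOne B) :
    ∃ A : Finset (commutator G), A.card = Multiset.card B ∧ (1 : (commutator G)) ∉ A ∧
      ∀ v ∈ A, (v : G) ∈ prodSet B := by
  classical
  set l : List G := B.toList with hldef
  have hl : (l : Multiset G) = B := Multiset.coe_toList B
  set k : ℕ := l.length with hkdef
  have hk : k = Multiset.card B := by rw [hkdef, hldef, Multiset.length_toList]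
  set P : G := l.prod with hPdef
  have hP1 : P ≠ 1 := fun h => hnot1 ⟨l, hl, h⟩
  have hofP : Abelianization.of P = 1 := by
    rw [hPdef, map_list_prod]
    rw [← hB1, ← hl, Multiset.map_coe, Multiset.prod_coe]
  have hPN : P ∈ commutator G := (QuotientGroup.eq_one_iff P).mp hofP
  set f : ℕ → G := fun i => (l.drop i).prod * (l.take i).prod with hfdef
  have hsplit : ∀ i, (l.take i).prod * (l.drop i).prod = P := by
    intro i
    rw [← List.prod_append, List.take_append_drop]
  have hfP : ∀ i, f i = ((l.take i).prod)⁻¹ * P * (l.take i).prod := by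
    intro i
    rw [← hsplit i]
    group
    rfl
  have hfN : ∀ i, f i ∈ commutator G := by
    intro i
    rw [hfP i]
    have := (Subgroup.commutator_normal (⊤ : Subgroup G) ⊤).conj_mem P hPN ((l.take i).prod)⁻¹
    rw [_root_.commutator_def]
    simpa using this
  have hfprod : ∀ i, f i ∈ prodSet B := by
    intro i
    refine ⟨l.drop i ++ l.take i, ?_, by simp [hfdef]⟩
    rw [← hl]
    exact Multiset.coe_eq_coe.mpr ((List.perm_append_comm).trans (by rw [List.take_append_drop]))
  have hf1 : ∀ i, f i ≠ 1 := by
    intro i h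
    apply hP1
    rw [hfP i] at h
    have : P = (l.take i).prod * (((l.take i).prod)⁻¹ * P * (l.take i).prod) * ((l.take i).prod)⁻¹ := by
      group
    rw [h] at this
    simpa using this
  -- distinctness
  have haux : ∀ i j, i < j → j < k → f i ≠ f j := by
    intro i j hij hjk heq
    set ci : G := (l.take i).prod
    set cj : G := (l.take j).prod
    have h : ci⁻¹ * P * ci = cj⁻¹ * P * cj := by
      rw [← hfP i, ← hfP j, heq]
    have hu : (cj * ci⁻¹) * P = P * (cj * ci⁻¹) := by
      have e1 : (cj * ci⁻¹) * P = cj * (ci⁻¹ * P * ci) * ci⁻¹ := by group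
      rw [h] at e1
      rw [e1]
      group
    have humem : cj * ci⁻¹ ∈ commutator G := hcent P hPN hP1 _ hu
    have hofeq : Abelianization.of cj = Abelianization.of ci := by
      have h1 : Abelianization.of (cj * ci⁻¹) = 1 := (QuotientGroup.eq_one_iff _).mpr humem
      rw [map_mul, map_inv] at h1
      exact mul_inv_eq_one.mp h1
    set seg : List G := (l.take j).drop i with hsegdef
    have htj : l.take j = l.take i ++ seg := by
      conv_lhs => rw [← List.take_append_drop i (l.take j)]
      rw [List.take_take, min_eq_left hij.le, hsegdef]
    have hseglen : seg.length = j - i := by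
      rw [hsegdef, List.length_drop, List.length_take]
      have : j ≤ l.length := le_of_lt hjk
      omega
    have hseg0 : seg ≠ [] := by
      intro h
      rw [h] at hseglen
      simp at hseglen
      omega
    have hsegprod : Abelianization.of seg.prod = 1 := by
      have hcj : cj = ci * seg.prod := by
        show (l.take j).prod = _
        rw [htj, List.prod_append]
      have hmm : Abelianization.of ci * Abelianization.of seg.prod = Abelianization.of ci := by
        rw [← map_mul, ← hcj, hofeq]
      exact mul_eq_left.mp hmm
    have hsegle : (seg : Multiset G) ≤ B := by
      rw [← hl]
      exact Multiset.coe_le.mpr (((l.take j).drop_sublist i).trans (l.take_sublist j)).subperm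
    have hsegne : (seg : Multiset G) ≠ 0 := by
      simpa using hseg0
    have hsegprod' : ((seg : Multiset G).map Abelianization.of).prod = 1 := by
      rw [Multiset.map_coe, Multiset.prod_coe, ← map_list_prod]
      exact hsegprod
    have hsegB := hmin (seg : Multiset G) hsegle hsegne hsegprod'
    have hcard : Multiset.card (seg : Multiset G) = j - i := by simpa using hseglen
    rw [hsegB] at hcard
    omega
  classical
  set F : ℕ → commutator G := fun i => ⟨f i, hfN i⟩ with hFdef
  refine ⟨(Finset.range k).image F, ?_, ?_, ?_⟩
  · rw [Finset.card_image_of_injOn, Finset.card_range, hk]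
    intro i hi j hj hFij
    simp only [Finset.coe_range, Set.mem_Iio] at hi hj
    by_contra hne
    have hfij : f i = f j := congrArg Subtype.val hFij
    rcases lt_or_gt_of_ne hne with h | h
    · exact haux i j h hj hfij
    · exact haux j i h hi hfij.symm
  · intro h1A
    obtain ⟨i, _, hFi⟩ := Finset.mem_image.mp h1A
    exact hf1 i (congrArg Subtype.val hFi)
  · intro v hv
    obtain ⟨i, _, hFi⟩ := Finset.mem_image.mp hv
    rw [← hFi]
    exact hfprod i

lemma CDq {q : ℕ} (hq : q.Prime) {H : Type*} [Group H] [Finite H] [DecidableEq H] (hH : Nat.card H = q)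
    {s t : Finset H} (hs : s.Nonempty) (ht : t.Nonempty) :
    min q (s.card + t.card - 1) ≤ (s * t).card := by
  have hmin : (q : ℕ∞) ≤ Monoid.minOrder H := by
    rw [Monoid.le_minOrder]
    intro a ha _
    have h1 : orderOf a ∣ q := hH ▸ orderOf_dvd_natCard a
    rcases hq.eq_one_or_self_of_dvd _ h1 with h | h
    · exact absurd (orderOf_eq_one_iff.mp h) ha
    · exact_mod_cast h.ge
  have h := cauchy_davenport_minOrder_mul hs ht
  rcases min_le_iff.mp h with h' | h'
  · have : (q : ℕ∞) ≤ ((s * t).card : ℕ∞) := le_trans hmin h'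
    have hq' : q ≤ (s * t).card := by exact_mod_cast this
    exact le_trans (min_le_left _ _) hq'
  · have : s.card + t.card - 1 ≤ (s * t).card := by exact_mod_cast h'
    exact le_trans (min_le_right _ _) this

lemma ACC {q : ℕ} (hq : q.Prime) (N : Subgroup G) [Finite G] [DecidableEq ↥N] (hN : Nat.card N = q) :
    ∀ (its : List (Finset N × Multiset G)),
    (∀ x ∈ its, x.1.Nonempty ∧ (1 : N) ∉ x.1 ∧ ∀ v ∈ x.1, (v : G) ∈ prodSet x.2) →
    ∀ (A₀ : Finset N) (M₀ : Multiset G), A₀.Nonempty →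
    (∀ v ∈ A₀, ∃ T, T ≤ M₀ ∧ T ≠ 0 ∧ (v : G) ∈ prodSet T) →
    ∃ A : Finset N, A.Nonempty ∧ min q (A₀.card + (its.map fun x => x.1.card).sum) ≤ A.card ∧
      ∀ v ∈ A, ∃ T, T ≤ M₀ + (its.map Prod.snd).sum ∧ T ≠ 0 ∧ (v : G) ∈ prodSet T := by
  intro its
  induction its with
  | nil =>
    intro _ A₀ M₀ hA₀ hgood
    refine ⟨A₀, hA₀, by simpa using min_le_right _ _, ?_⟩
    simpa using hgood
  | cons x xs ih =>
    intro hits A₀ M₀ hA₀ hgood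
    classical
    obtain ⟨hxne, hx1, hxval⟩ := hits x List.mem_cons_self
    set A₁ : Finset N := A₀ * insert (1 : N) x.1 with hA₁def
    have hA₁ne : A₁.Nonempty := hA₀.mul (Finset.insert_nonempty _ _)
    have hcard : min q (A₀.card + x.1.card) ≤ A₁.card := by
      have h := CDq hq hN hA₀ (Finset.insert_nonempty (1 : N) x.1)
      rw [Finset.card_insert_of_notMem hx1] at h
      have harith : A₀.card + (x.1.card + 1) - 1 = A₀.card + x.1.card := by omega
      rw [harith] at h
      exact h
    have hgood₁ : ∀ v ∈ A₁, ∃ T, T ≤ M₀ + x.2 ∧ T ≠ 0 ∧ (v : G) ∈ prodSet T := by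
      intro v hv
      obtain ⟨a, ha, b, hb, hab⟩ := Finset.mem_mul.mp hv
      obtain ⟨Ta, hTa, hTa0, hTaprod⟩ := hgood a ha
      rcases Finset.mem_insert.mp hb with rfl | hbx
      · refine ⟨Ta, le_trans hTa (Multiset.le_add_right _ _), hTa0, ?_⟩
        have : v = a := by rw [← hab, mul_one]
        rw [this]
        exact hTaprod
      · refine ⟨Ta + x.2, add_le_add hTa le_rfl, by simp [hTa0], ?_⟩
        have : (v : G) = (a : G) * (b : G) := by rw [← hab]; rfl
        rw [this]
        exact prodSet_add hTaprod (hxval b hbx)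
    obtain ⟨A, hAne, hAcard, hAgood⟩ :=
      ih (fun y hy => hits y (List.mem_cons_of_mem x hy)) A₁ (M₀ + x.2) hA₁ne hgood₁
    refine ⟨A, hAne, ?_, ?_⟩
    · simp only [List.map_cons, List.sum_cons]
      omega
    · intro v hv
      obtain ⟨T, hT, hT0, hTprod⟩ := hAgood v hv
      refine ⟨T, ?_, hT0, hTprod⟩
      simpa [add_assoc] using hT

end Comb

section Build
variable {G : Type*} [Group G]

lemma build_items [DecidableEq ↥(commutator G)]
    (hcent : ∀ P : G, P ∈ commutator G → P ≠ 1 → ∀ u : G, u * P = P * u → u ∈ commutator G)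
    (S : Multiset G)
    (hno : ∀ T : Multiset G, T ≤ S → T ≠ 0 → ¬ IsProductOne T) :
    ∀ L : List (Multiset G), (∀ B ∈ L, B ≤ S ∧ B ≠ 0 ∧ (B.map Abelianization.of).prod = 1 ∧
        (∀ B' ≤ B, B' ≠ 0 → (B'.map Abelianization.of).prod = 1 → B' = B)) →
    ∃ its : List (Finset (commutator G) × Multiset G),
      its.map Prod.snd = L ∧
      (∀ x ∈ its, x.1.Nonempty ∧ (1 : (commutator G)) ∉ x.1 ∧ ∀ v ∈ x.1, (v : G) ∈ prodSet x.2) ∧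
      (its.map fun x => x.1.card) = L.map Multiset.card := by
  intro L
  induction L with
  | nil => exact fun _ => ⟨[], rfl, by simp, by simp⟩
  | cons B L ih =>
    intro hL
    obtain ⟨hBS, hB0, hB1, hBmin⟩ := hL B List.mem_cons_self
    obtain ⟨A, hAcard, hA1, hAval⟩ := block_values hcent B hB0 hB1 hBmin (hno B hBS hB0)
    obtain ⟨its, h1, h2, h3⟩ := ih (fun C hC => hL C (List.mem_cons_of_mem _ hC))
    refine ⟨(A, B) :: its, by simp [h1], ?_, by simp [h3, hAcard]⟩
    intro x hx
    rcases List.mem_cons.mp hx with rfl | hx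
    · exact ⟨Finset.card_pos.mp (by rw [hAcard]; exact Multiset.card_pos.mpr hB0), hA1, hAval⟩
    · exact h2 x hx

end Build

end Aux

theorem stmt11 (p q : ℕ) (hp : p.Prime) (hq : q.Prime) (hpq : p ∣ q - 1)
    (G : Type*) [Group G] [Finite G] (hG : Nat.card G = p * q)
    (hna : ¬ ∀ a b : G, a * b = b * a)
    (S : Multiset G) (hπ : prodSet S ⊆ (commutator G : Set G))
    (hlen : q ≤ Multiset.card S) :
    ∃ T : Multiset G, T ≤ S ∧ T ≠ 0 ∧ IsProductOne T := by
  by_contra hcon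
  push_neg at hcon
  classical
  have hq2 := hq.two_le
  have hS0 : S ≠ 0 := by
    intro h
    rw [h] at hlen
    simp at hlen
    omega
  have hNcard : Nat.card (commutator G) = q := card_commutator_eq hp hq hpq hG hna
  have hcent := centralizer_mem hp hq hpq hG hna hNcard
  have hSprod : (S.map Abelianization.of).prod = 1 := by
    have hl : ((S.toList : List G) : Multiset G) = S := Multiset.coe_toList S
    have hmem : S.toList.prod ∈ prodSet S := ⟨S.toList, hl, rfl⟩
    have hPmem : S.toList.prod ∈ commutator G := hπ hmem
    rw [← hl, Multiset.map_coe, Multiset.prod_coe, ← map_list_prod]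
    exact (QuotientGroup.eq_one_iff _).mpr hPmem
  obtain ⟨L, hLsum, hLprop⟩ := exists_blocks S hSprod
  have hLS : ∀ B ∈ L, B ≤ S := fun B hB => hLsum ▸ mem_le_sum hB
  obtain ⟨its, hsnd, hitsprop, hcards⟩ := build_items hcent S hcon L
      (fun B hB => ⟨hLS B hB, (hLprop B hB).1, (hLprop B hB).2.1, (hLprop B hB).2.2⟩)
  have hL0 : L ≠ [] := by
    intro h
    rw [h] at hLsum
    simp at hLsum
    exact hS0 hLsum.symm
  rcases its with _ | ⟨x, rest⟩
  · rw [← hsnd] at hL0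
    simp at hL0
  · obtain ⟨hxne, hx1, hxval⟩ := hitsprop x List.mem_cons_self
    have hx2mem : x.2 ∈ L := by
      rw [← hsnd]
      exact List.mem_map_of_mem (f := Prod.snd) List.mem_cons_self
    have hx20 : x.2 ≠ 0 := (hLprop _ hx2mem).1
    have hgood₀ : ∀ v ∈ x.1, ∃ T, T ≤ x.2 ∧ T ≠ 0 ∧ (v : G) ∈ prodSet T :=
      fun v hv => ⟨x.2, le_rfl, hx20, hxval v hv⟩
    obtain ⟨A, hAne, hAcard, hAgood⟩ := ACC hq (commutator G) hNcard rest
      (fun y hy => hitsprop y (List.mem_cons_of_mem _ hy)) x.1 x.2 hxne hgood₀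
    have hsum1 : x.1.card + (rest.map fun y => y.1.card).sum = (L.map Multiset.card).sum := by
      rw [← hcards]
      simp
    have hsum2 : (L.map Multiset.card).sum = Multiset.card S := by
      rw [← hLsum, card_list_sum]
    have hqle : q ≤ x.1.card + (rest.map fun y => y.1.card).sum := by
      rw [hsum1, hsum2]
      exact hlen
    rw [min_eq_left hqle] at hAcard
    haveI : Fintype ↥(commutator G) := Fintype.ofFinite _
    have hcardeq : Fintype.card ↥(commutator G) = q := by
      rw [← Nat.card_eq_fintype_card, hNcard]
    have hAuniv : A = Finset.univ :=
      Finset.eq_univ_of_card A (le_antisymm (hcardeq ▸ Finset.card_le_univ A) (hcardeq ▸ hAcard))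
    have h1A : (1 : ↥(commutator G)) ∈ A := hAuniv ▸ Finset.mem_univ _
    obtain ⟨T, hTle, hT0, hTprod⟩ := hAgood 1 h1A
    have hTS : T ≤ S := by
      have hxs : x.2 + (rest.map Prod.snd).sum = S := by
        rw [← hLsum, ← hsnd]
        simp
      rwa [hxs] at hTle
    exact hcon T hTS hT0 (by simpa [IsProductOne] using hTprod)
end

section
/- Let p and q be primes with p dividing q−1, and let G be a finite non-abelian group of order pq (the group F_pq). Then d(G) = q + p − 2. -/
set_option linter.unusedSectionVars false
set_option maxHeartbeats 1000000


open Pointwise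

/-- all products of "pick at most one element from each finset, in order" -/
def selProd {H : Type*} [Group H] [DecidableEq H] (l : List (Finset H)) : Finset H :=
  l.foldr (fun A acc => insert 1 A * acc) {1}

section SelProd

variable {H : Type*} [Group H] [Fintype H] [DecidableEq H] {q : ℕ}

lemma selProd_cons (A : Finset H) (l : List (Finset H)) :
    selProd (A :: l) = insert 1 A * selProd l := rfl

lemma one_mem_selProd (l : List (Finset H)) : (1 : H) ∈ selProd l := by
  induction l with
  | nil => simp [selProd]
  | cons A l ih =>
      rw [selProd_cons]
      simpa using Finset.mul_mem_mul (Finset.mem_insert_self 1 A) ih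

lemma selProd_nonempty (l : List (Finset H)) : (selProd l).Nonempty :=
  ⟨1, one_mem_selProd l⟩

omit [DecidableEq H] in
lemma minOrder_eq (hq : q.Prime) (hH : Fintype.card H = q) :
    (q : ℕ∞) ≤ Monoid.minOrder H := by
  rw [Monoid.le_minOrder]
  intro a ha _
  have hdvd : orderOf a ∣ q := hH ▸ orderOf_dvd_card
  rcases (Nat.Prime.eq_one_or_self_of_dvd hq _ hdvd) with h1 | h1
  · exact absurd (orderOf_eq_one_iff.mp h1) ha
  · exact_mod_cast le_of_eq h1.symm

lemma selProd_card (hq : q.Prime) (hH : Fintype.card H = q) :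
    ∀ l : List (Finset H), (∀ A ∈ l, (1 : H) ∉ A) →
      min q (1 + (l.map Finset.card).sum) ≤ (selProd l).card := by
  intro l hl
  induction l with
  | nil => simpa [selProd] using hq.one_lt.le
  | cons A l ih =>
      have hA1 : (1 : H) ∉ A := hl A List.mem_cons_self
      have ih' : min q (1 + (l.map Finset.card).sum) ≤ (selProd l).card :=
        ih (fun B hB => hl B (List.mem_cons_of_mem _ hB))
      have hins : (insert 1 A).card = A.card + 1 := Finset.card_insert_of_notMem hA1
      have hcd := cauchy_davenport_minOrder_mul (α := H)
        (s := insert 1 A) (t := selProd l) ⟨1, Finset.mem_insert_self 1 A⟩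
        (selProd_nonempty l)
      have hmin := minOrder_eq hq hH
      have hcd2 : min (q : ℕ∞) (((insert 1 A).card + (selProd l).card - 1 : ℕ) : ℕ∞) ≤
          (((insert 1 A * selProd l).card : ℕ) : ℕ∞) :=
        le_trans (min_le_min_right _ hmin) hcd
      have hcd3 : q ≤ (insert 1 A * selProd l).card ∨
          (insert 1 A).card + (selProd l).card - 1 ≤ (insert 1 A * selProd l).card := by
        rcases le_total ((q : ℕ∞)) (((insert 1 A).card + (selProd l).card - 1 : ℕ) : ℕ∞)
          with h | h
        · left
          have := le_trans (le_trans (min_eq_left h).symm.le hcd2) (le_refl _)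
          exact_mod_cast this
        · right
          have := le_trans (le_trans (min_eq_right h).symm.le hcd2) (le_refl _)
          exact_mod_cast this
      rw [selProd_cons]
      simp only [List.map_cons, List.sum_cons]
      omega

lemma selProd_exists (hq : q.Prime) (hH : Fintype.card H = q)
    (A : Finset H) (hA : A.Nonempty) (l : List (Finset H))
    (hl : ∀ B ∈ l, (1 : H) ∉ B)
    (hsum : q ≤ A.card + (l.map Finset.card).sum) :
    ∃ a ∈ A, a⁻¹ ∈ selProd l := by
  by_cases hbig : q ≤ (selProd l).card
  · have huniv : selProd l = Finset.univ := by
      apply Finset.eq_univ_of_card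
      have := Finset.card_le_univ (selProd l)
      omega
    obtain ⟨a, ha⟩ := hA
    exact ⟨a, ha, huniv ▸ Finset.mem_univ _⟩
  · push_neg at hbig
    have hT := selProd_card hq hH l hl
    have hT2 : 1 + (l.map Finset.card).sum ≤ (selProd l).card := by omega
    have hcardinv : (A⁻¹ : Finset H).card = A.card := Finset.card_inv A
    have hunion : ((A⁻¹ : Finset H) ∪ selProd l).card ≤ q := hH ▸ Finset.card_le_univ _
    have hint : ((A⁻¹ : Finset H) ∩ selProd l).Nonempty := by
      rw [← Finset.card_pos]
      have := Finset.card_union_add_card_inter (A⁻¹ : Finset H) (selProd l)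
      omega
    obtain ⟨x, hx⟩ := hint
    rw [Finset.mem_inter, Finset.mem_inv] at hx
    obtain ⟨⟨a, ha, rfl⟩, hx2⟩ := hx
    exact ⟨a, ha, by simpa using hx2⟩

end SelProd

/-- A bag: a sub-multiset `B` of our sequence together with a finset `A` of values in `N`,
each of which is realizable as the product of the elements of `B` in some order. -/
structure DavBag (G : Type*) [Group G] (N : Subgroup G) where
  B : Multiset G
  A : Finset ↥N
  hB : B ≠ 0
  h1 : (1 : ↥N) ∉ A
  hne : A.Nonempty
  hsize : A.card = Multiset.card B
  good : ∀ v ∈ A, ∃ w : List G, (w : Multiset G) = B ∧ w.prod = (v : G)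

section Bags

variable {G : Type*} [Group G] {N : Subgroup G} [DecidableEq ↥N]

lemma bag_realize (L : List (DavBag G N)) :
    ∀ t ∈ selProd (L.map DavBag.A), ∃ w : List G,
      (w : Multiset G) ≤ (L.map DavBag.B).sum ∧ w.prod = (t : G) := by
  induction L with
  | nil =>
      intro t ht
      simp only [List.map_nil, selProd, List.foldr_nil, Finset.mem_singleton] at ht
      exact ⟨[], by simp, by simp [ht]⟩
  | cons b L ih =>
      intro t ht
      have hsel : selProd ((b :: L).map DavBag.A) =
          insert 1 b.A * selProd (L.map DavBag.A) := rfl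
      rw [hsel, Finset.mem_mul] at ht
      obtain ⟨x, hx, y, hy, hxy⟩ := ht
      obtain ⟨w', hw'le, hw'prod⟩ := ih y hy
      rcases Finset.mem_insert.mp hx with rfl | hxA
      · refine ⟨w', ?_, ?_⟩
        · simp only [List.map_cons, List.sum_cons]
          exact le_trans hw'le (Multiset.le_add_left _ _)
        · rw [hw'prod, ← hxy]; simp
      · obtain ⟨wa, hwa, hwaprod⟩ := b.good x hxA
        refine ⟨wa ++ w', ?_, ?_⟩
        · simp only [List.map_cons, List.sum_cons]
          rw [← Multiset.coe_add] at *
          calc (↑wa + ↑w' : Multiset G) = b.B + ↑w' := by rw [hwa]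
            _ ≤ b.B + (L.map DavBag.B).sum := by exact add_le_add (le_refl _) hw'le
        · rw [List.prod_append, hwaprod, hw'prod, ← hxy]
          simp
  
lemma bags_main [Fintype ↥N] {q : ℕ} (hq : q.Prime) (hcard : Fintype.card ↥N = q)
    (L : List (DavBag G N))
    (hsum : q ≤ (L.map (fun b => b.A.card)).sum) :
    ∃ w : List G, w ≠ [] ∧ (w : Multiset G) ≤ (L.map DavBag.B).sum ∧ w.prod = 1 := by
  match L with
  | [] => simp at hsum; exact absurd hsum (by have := hq.two_le; omega)
  | b :: L =>
      have h1 : ∀ B ∈ (L.map DavBag.A), (1 : ↥N) ∉ B := by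
        intro B hB
        obtain ⟨c, _, rfl⟩ := List.mem_map.mp hB
        exact c.h1
      have hsum' : q ≤ b.A.card + ((L.map DavBag.A).map Finset.card).sum := by
        rw [List.map_map]
        simpa [Function.comp_def] using hsum
      obtain ⟨a, ha, hainv⟩ := selProd_exists hq hcard b.A b.hne (L.map DavBag.A) h1 hsum'
      obtain ⟨w', hw'le, hw'prod⟩ := bag_realize L a⁻¹ hainv
      obtain ⟨wa, hwa, hwaprod⟩ := b.good a ha
      refine ⟨wa ++ w', ?_, ?_, ?_⟩
      · intro h
        have : (wa : Multiset G) = 0 := by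
          rw [List.append_eq_nil_iff] at h
          simp [h.1]
        exact b.hB (by rw [← hwa, this])
      · simp only [List.map_cons, List.sum_cons, ← Multiset.coe_add]
        rw [hwa]
        exact add_le_add (le_refl _) hw'le
      · rw [List.prod_append, hwaprod, hw'prod]
        simp
end Bags

section Blocks

variable {G Q : Type*} [Group G] [CommGroup Q] [Fintype Q] [DecidableEq Q] (φ : G →* Q)

/-- A zero block: nonempty, with product of images trivial. -/
def IsZB (B : Multiset G) : Prop := B ≠ 0 ∧ (B.map φ).prod = 1

/-- A minimal zero block. -/
def IsMinZB (B : Multiset G) : Prop :=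
  IsZB φ B ∧ ∀ C ≤ B, C ≠ 0 → Multiset.card C < Multiset.card B → (C.map φ).prod ≠ 1

lemma seg_facts (l : List G) {i j : ℕ} (hij : i < j) (hj : j ≤ l.length) :
    ((((l.drop i).take (j - i) : List G) : Multiset G) ≤ (l : Multiset G)) ∧
    (((l.drop i).take (j - i) : List G) ≠ []) ∧
    φ (l.take j).prod = φ (l.take i).prod * φ ((l.drop i).take (j - i)).prod := by
  set seg := (l.drop i).take (j - i) with hseg
  have htake : l.take j = l.take i ++ seg := by
    have := List.take_add (l := l) (i := i) (j := j - i)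
    rwa [Nat.add_sub_cancel' hij.le] at this
  refine ⟨?_, ?_, ?_⟩
  · have hsub : seg.Sublist l :=
      ((List.take_sublist _ _).trans (List.drop_sublist _ _))
    exact Multiset.coe_le.mpr hsub.subperm
  · have hlen : seg.length = j - i := by
      rw [hseg, List.length_take, List.length_drop]
      omega
    intro h
    rw [h] at hlen
    simp at hlen
    omega
  · rw [htake, List.prod_append, map_mul]

lemma exists_zb (O : Multiset G) (h : Fintype.card Q ≤ Multiset.card O) :
    ∃ B ≤ O, IsZB φ B := by
  obtain ⟨l, rfl⟩ : ∃ l : List G, (l : Multiset G) = O := ⟨O.toList, O.coe_toList⟩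
  have hlen : l.length = Multiset.card (l : Multiset G) := (Multiset.coe_card l).symm
  have hmaps : ∀ j ∈ Finset.range (Fintype.card Q + 1),
      φ ((l.take j).prod) ∈ (Finset.univ : Finset Q) := fun j _ => Finset.mem_univ _
  obtain ⟨x, hx, y, hy, hxy, hfeq⟩ :=
    Finset.exists_ne_map_eq_of_card_lt_of_maps_to
      (by simp : (Finset.univ : Finset Q).card < (Finset.range (Fintype.card Q + 1)).card) hmaps
  wlog hlt : x < y generalizing x y
  · exact this y hy x hx hxy.symm hfeq.symm (by omega)
  have hyle : y ≤ l.length := by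
    rw [Finset.mem_range] at hy
    omega
  obtain ⟨hle, hne, hprod⟩ := seg_facts φ l hlt hyle
  refine ⟨_, hle, ?_, ?_⟩
  · simpa using hne
  · rw [Multiset.map_coe, Multiset.prod_coe, ← map_list_prod]
    rw [← hfeq] at hprod
    exact (left_eq_mul.mp hprod)

lemma exists_minzb : ∀ (n : ℕ) (B : Multiset G), Multiset.card B ≤ n → IsZB φ B →
    ∃ C ≤ B, IsMinZB φ C := by
  intro n
  induction n with
  | zero =>
      intro B hcard hzb
      exact absurd (Multiset.card_eq_zero.mp (by omega)) hzb.1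
  | succ n ih =>
      intro B hcard hzb
      by_cases hmin : ∀ C ≤ B, C ≠ 0 → Multiset.card C < Multiset.card B → (C.map φ).prod ≠ 1
      · exact ⟨B, le_refl _, hzb, hmin⟩
      · push_neg at hmin
        obtain ⟨C, hCB, hC0, hClt, hCprod⟩ := hmin
        obtain ⟨C', hC'C, hC'⟩ := ih C (by omega) ⟨hC0, hCprod⟩
        exact ⟨C', hC'C.trans hCB, hC'⟩

lemma greedy [DecidableEq G] : ∀ (n : ℕ) (O : Multiset G), Multiset.card O ≤ n →
    ∃ (Bs : List (Multiset G)) (rest : Multiset G),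
      Bs.sum + rest = O ∧ Multiset.card rest < Fintype.card Q ∧ ∀ B ∈ Bs, IsMinZB φ B := by
  intro n
  induction n with
  | zero =>
      intro O hO
      refine ⟨[], O, by simp, ?_, by simp⟩
      have := Fintype.card_pos (α := Q)
      omega
  | succ n ih =>
      intro O hO
      by_cases h : Multiset.card O < Fintype.card Q
      · exact ⟨[], O, by simp, h, by simp⟩
      · push_neg at h
        obtain ⟨B, hBO, hzb⟩ := exists_zb φ O h
        obtain ⟨C, hCB, hC⟩ := exists_minzb φ _ B (le_refl _) hzb
        have hCO : C ≤ O := hCB.trans hBO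
        have hC0 : C ≠ 0 := hC.1.1
        have hCcard : 1 ≤ Multiset.card C := by
          rcases Multiset.card_pos.mpr hC0 with h'
          omega
        have hsub : O - C + C = O := tsub_add_cancel_of_le hCO
        have hlt : Multiset.card (O - C) ≤ n := by
          have := Multiset.card_mono hCO
          have hcs : Multiset.card (O - C) = Multiset.card O - Multiset.card C := by
            rw [← hsub]
            simp
          omega
        obtain ⟨Bs, rest, hsum, hrest, hall⟩ := ih (O - C) hlt
        refine ⟨C :: Bs, rest, ?_, hrest, ?_⟩
        · rw [List.sum_cons, add_assoc, hsum]
          rw [add_comm] at hsub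
          exact hsub
        · intro B' hB'
          rcases List.mem_cons.mp hB' with rfl | hB'
          · exact hC
          · exact hall _ hB'

lemma mem_le_sum_s12 {Bs : List (Multiset G)} {B : Multiset G} (h : B ∈ Bs) : B ≤ Bs.sum := by
  induction Bs with
  | nil => simp at h
  | cons C Bs ih =>
      rcases List.mem_cons.mp h with rfl | h
      · simp only [List.sum_cons]
        exact Multiset.le_add_right _ _
      · exact (ih h).trans (by simp only [List.sum_cons]; exact Multiset.le_add_left _ _)

variable {N : Subgroup G} [DecidableEq ↥N]

lemma block_to_bag (hN : N.Normal)
    (hker : ∀ g : G, φ g = 1 ↔ g ∈ N)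
    (hconj : ∀ X, X ∈ N → X ≠ 1 → ∀ g h : G, φ g ≠ φ h → g⁻¹ * X * g ≠ h⁻¹ * X * h)
    (B : Multiset G) (hmz : IsMinZB φ B)
    (hne1 : ∀ l : List G, (l : Multiset G) = B → l.prod ≠ 1) :
    ∃ bag : DavBag G N, bag.B = B := by
  obtain ⟨l, hl⟩ : ∃ l : List G, (l : Multiset G) = B := ⟨B.toList, B.coe_toList⟩
  have hlen : l.length = Multiset.card B := by rw [← hl]; exact (Multiset.coe_card l)
  set s := l.length with hs
  have hs0 : 0 < s := by
    rw [hlen]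
    exact Multiset.card_pos.mpr hmz.1.1
  set X := l.prod with hX
  have hXN : X ∈ N := by
    rw [← hker]
    rw [map_list_prod, ← Multiset.prod_coe, ← Multiset.map_coe, hl]
    exact hmz.1.2
  have hX1 : X ≠ 1 := hne1 l hl
  set π : ℕ → G := fun j => (l.take j).prod with hπ
  have hvmem : ∀ j, (π j)⁻¹ * X * π j ∈ N := by
    intro j
    have := hN.conj_mem X hXN (π j)⁻¹
    simpa using this
  set v : ℕ → ↥N := fun j => ⟨(π j)⁻¹ * X * π j, hvmem j⟩ with hv
  have hlev : ∀ i j, i < j → j < s → φ (π i) ≠ φ (π j) := by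
    intro i j hij hjs heq
    obtain ⟨hle, hne, hprod⟩ := seg_facts φ l hij hjs.le
    set seg := (l.drop i).take (j - i)
    have hsegprod : φ seg.prod = 1 := by
      rw [← heq] at hprod
      exact (mul_left_cancel (a := φ (π i)) (by rw [← hprod, mul_one])).symm
    have hcard : Multiset.card (seg : Multiset G) < Multiset.card B := by
      rw [Multiset.coe_card, List.length_take, List.length_drop]
      omega
    refine hmz.2 (seg : Multiset G) (hl ▸ hle) (by simpa using hne) hcard ?_
    rw [Multiset.map_coe, Multiset.prod_coe, ← map_list_prod]
    exact hsegprod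
  have hvinj : ∀ i j, i < s → j < s → v i = v j → i = j := by
    intro i j his hjs heq
    by_contra hne
    have hval : (π i)⁻¹ * X * π i = (π j)⁻¹ * X * π j := congrArg Subtype.val heq
    rcases Nat.lt_or_ge i j with h | h
    · exact hconj X hXN hX1 (π i) (π j) (hlev i j h hjs) hval
    · have : j < i := by omega
      exact hconj X hXN hX1 (π j) (π i) (hlev j i this his) hval.symm
  have hrot : ∀ j, j < s → ∃ w : List G, (w : Multiset G) = B ∧ w.prod = ((v j : ↥N) : G) := by
    intro j hjs
    refine ⟨l.drop j ++ l.take j, ?_, ?_⟩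
    · calc ((l.drop j ++ l.take j : List G) : Multiset G)
          = (l.drop j : Multiset G) + (l.take j : Multiset G) := by rw [← Multiset.coe_add]
        _ = (l.take j : Multiset G) + (l.drop j : Multiset G) := add_comm _ _
        _ = ((l.take j ++ l.drop j : List G) : Multiset G) := by rw [← Multiset.coe_add]
        _ = (l : Multiset G) := by rw [List.take_append_drop]
        _ = B := hl
    · have hXd : π j * (l.drop j).prod = X := List.prod_take_mul_prod_drop l j
      have : (l.drop j).prod = (π j)⁻¹ * X := by
        rw [← hXd]; group
      rw [List.prod_append, this]
  refine ⟨⟨B, (Finset.range s).image v, hmz.1.1, ?_, ?_, ?_, ?_⟩, rfl⟩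
  · intro hmem
    obtain ⟨j, hj, hj1⟩ := Finset.mem_image.mp hmem
    have : (π j)⁻¹ * X * π j = 1 := congrArg Subtype.val hj1
    have : X = 1 := by
      have := congrArg (fun y => π j * y * (π j)⁻¹) this
      simpa [mul_assoc] using this
    exact hX1 this
  · exact ⟨v 0, Finset.mem_image_of_mem v (Finset.mem_range.mpr hs0)⟩
  · rw [Finset.card_image_of_injOn, Finset.card_range, hlen]
    intro i hi j hj heq
    exact hvinj i j (Finset.mem_range.mp (Finset.mem_coe.mp hi))
      (Finset.mem_range.mp (Finset.mem_coe.mp hj)) heq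
  · intro a ha
    obtain ⟨j, hj, rfl⟩ := Finset.mem_image.mp ha
    exact hrot j (Finset.mem_range.mp hj)

end Blocks


section Setup

variable {p q : ℕ} {G : Type*} [Group G] [Finite G]

lemma sylow_setup (hp : p.Prime) (hq : q.Prime) (hlt : p < q) (hG : Nat.card G = p * q) :
    ∃ N : Subgroup G, N.Normal ∧ Nat.card ↥N = q ∧ N.index = p := by
  haveI : Fact q.Prime := ⟨hq⟩
  obtain ⟨P⟩ : Nonempty (Sylow q G) := inferInstance
  have hfact : (Nat.card G).factorization q = 1 := by
    rw [hG, Nat.factorization_mul hp.pos.ne' hq.pos.ne', Finsupp.add_apply,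
      Nat.Prime.factorization_self hq,
      Nat.factorization_eq_zero_of_not_dvd (fun h => absurd (Nat.le_of_dvd hp.pos h) (by omega))]
  have hcard : Nat.card ↥(P : Subgroup G) = q := by
    rw [P.card_eq_multiplicity, hfact, pow_one]
  have hindex : (P : Subgroup G).index = p := by
    have h1 := Subgroup.card_mul_index (P : Subgroup G)
    rw [hcard, hG, mul_comm p q] at h1
    exact Nat.eq_of_mul_eq_mul_left hq.pos h1
  have hnum : Nat.card (Sylow q G) = 1 := by
    have hdvd : Nat.card (Sylow q G) ∣ p := hindex ▸ P.card_dvd_index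
    rcases hp.eq_one_or_self_of_dvd _ hdvd with h | h
    · exact h
    · exfalso
      have hmod := card_sylow_modEq_one q G
      rw [h] at hmod
      have : p % q = 1 % q := hmod
      rw [Nat.mod_eq_of_lt hlt, Nat.mod_eq_of_lt hq.one_lt] at this
      exact hp.one_lt.ne' this
  have hnormal : (P : Subgroup G).Normal := by
    rw [← Subgroup.normalizer_eq_top_iff]
    rw [← Subgroup.index_eq_one]
    exact P.card_eq_index_normalizer.symm.trans hnum
  exact ⟨P, hnormal, hcard, hindex⟩

lemma conj_distinct (hp : p.Prime) (hq : q.Prime) (hG' : Nat.card G = p * q)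
    (hna : ¬ ∀ a b : G, a * b = b * a)
    (N : Subgroup G) (hN : N.Normal) (hNq : Nat.card ↥N = q) (hNi : N.index = p) :
    ∀ X ∈ N, X ≠ 1 → ∀ g h : G,
      QuotientGroup.mk' N g ≠ QuotientGroup.mk' N h → g⁻¹ * X * g ≠ h⁻¹ * X * h := by
  haveI : Fact q.Prime := ⟨hq⟩
  haveI : Fact p.Prime := ⟨hp⟩
  intro X hXN hX1 g h hgh heq
  apply hna
  -- d commutes with X
  set d := g * h⁻¹ with hd
  have hcomm : d * X = X * d := by
    have h2 : X = d * X * d⁻¹ := by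
      have h3 : g * (g⁻¹ * X * g) * g⁻¹ = g * (h⁻¹ * X * h) * g⁻¹ := by rw [heq]
      calc X = g * (g⁻¹ * X * g) * g⁻¹ := by group
        _ = g * (h⁻¹ * X * h) * g⁻¹ := h3
        _ = d * X * d⁻¹ := by rw [hd]; group
    calc d * X = (d * X * d⁻¹) * d := by group
      _ = X * d := by rw [← h2]
  have hdN : d ∉ N := by
    intro hmem
    apply hgh
    have h1 : QuotientGroup.mk' N d = 1 := (QuotientGroup.eq_one_iff d).mpr hmem
    have h2 : QuotientGroup.mk' N d = QuotientGroup.mk' N g * (QuotientGroup.mk' N h)⁻¹ := by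
      rw [hd, map_mul, map_inv]
    rw [h2] at h1
    rw [mul_inv_eq_one] at h1
    exact h1
  -- N is commutative
  haveI : IsCyclic ↥N := isCyclic_of_prime_card (p := q) hNq
  have hNcomm : ∀ n ∈ N, n * X = X * n := by
    letI : CommGroup ↥N := IsCyclic.commGroup
    intro n hn
    have : (⟨n, hn⟩ : ↥N) * ⟨X, hXN⟩ = ⟨X, hXN⟩ * ⟨n, hn⟩ := mul_comm _ _
    exact congrArg Subtype.val this
  -- the centralizer of X is everything
  set K := Subgroup.centralizer {X} with hK
  have hNK : N ≤ K := by
    intro n hn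
    rw [hK, Subgroup.mem_centralizer_iff]
    intro y hy
    rw [Set.mem_singleton_iff] at hy
    subst hy
    exact (hNcomm n hn).symm
  have hdK : d ∈ K := by
    rw [hK, Subgroup.mem_centralizer_iff]
    intro y hy
    rw [Set.mem_singleton_iff] at hy
    subst hy
    exact hcomm.symm
  have hKtop : K = ⊤ := by
    have hdvd : K.index ∣ p := hNi ▸ Subgroup.index_dvd_of_le hNK
    rcases hp.eq_one_or_self_of_dvd _ hdvd with h1 | h1
    · exact Subgroup.index_eq_one.mp h1
    · exfalso
      have hrel := Subgroup.relIndex_mul_index hNK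
      rw [h1, hNi] at hrel
      have : N.relIndex K = 1 := by
        have hp0 := hp.pos
        exact Nat.eq_of_mul_eq_mul_right hp0 (by omega)
      exact hdN (Subgroup.relIndex_eq_one.mp this hdK)
  have hXcenter : X ∈ Subgroup.center G := by
    rw [Subgroup.mem_center_iff]
    intro y
    have : y ∈ K := hKtop ▸ Subgroup.mem_top y
    rw [hK, Subgroup.mem_centralizer_iff] at this
    exact (this X (Set.mem_singleton X)).symm
  -- N ≤ center
  have horder : orderOf X = q := by
    have h1 : orderOf (⟨X, hXN⟩ : ↥N) ∣ q := hNq ▸ orderOf_dvd_natCard _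
    rcases hq.eq_one_or_self_of_dvd _ h1 with h2 | h2
    · exfalso
      have := orderOf_eq_one_iff.mp h2
      apply hX1
      exact congrArg Subtype.val this
    · rw [← h2]
      exact Subgroup.orderOf_coe (⟨X, hXN⟩ : ↥N)
  have hzN : Subgroup.zpowers X ≤ N := Subgroup.zpowers_le.mpr hXN
  have hzcard : Nat.card ↥(Subgroup.zpowers X) = q := by rw [Nat.card_zpowers, horder]
  have hzindex : (Subgroup.zpowers X).index = p := by
    have h1 := Subgroup.card_mul_index (Subgroup.zpowers X)
    rw [hzcard, hG', mul_comm p q] at h1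
    exact Nat.eq_of_mul_eq_mul_left hq.pos h1
  have hNz : N ≤ Subgroup.zpowers X := by
    have hrel := Subgroup.relIndex_mul_index hzN
    rw [hzindex, hNi] at hrel
    have : (Subgroup.zpowers X).relIndex N = 1 :=
      Nat.eq_of_mul_eq_mul_right hp.pos (by omega)
    exact Subgroup.relIndex_eq_one.mp this
  have hNcenter : N ≤ Subgroup.center G :=
    le_trans hNz (Subgroup.zpowers_le.mpr hXcenter)
  haveI : IsCyclic (G ⧸ N) := by
    apply isCyclic_of_prime_card (p := p)
    rw [← Subgroup.index_eq_card, hNi]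
  letI : CommGroup G := commGroupOfCyclicCenterQuotient (QuotientGroup.mk' N)
    (by rw [QuotientGroup.ker_mk']; exact hNcenter)
  exact fun a b => mul_comm a b

end Setup


section Main

variable {p q : ℕ} {G : Type*} [Group G] [Finite G]

lemma upper_bound (hp : p.Prime) (hq : q.Prime) (hlt : p < q) (hG : Nat.card G = p * q)
    (hna : ¬ ∀ a b : G, a * b = b * a)
    (S : Multiset G) (hfree : ∀ T : Multiset G, T ≤ S → T ≠ 0 → ¬ IsProductOne T) :
    Multiset.card S ≤ q + p - 2 := by
  classical
  by_contra hbig'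
  have hbig : q + p - 1 ≤ Multiset.card S := by
    have := hp.two_le; have := hq.two_le; omega
  obtain ⟨N, hN, hNq, hNi⟩ := sylow_setup hp hq hlt hG
  haveI := hN
  haveI : Fact p.Prime := ⟨hp⟩
  haveI : Fact q.Prime := ⟨hq⟩
  haveI : IsCyclic (G ⧸ N) := by
    apply isCyclic_of_prime_card (p := p)
    rw [← Subgroup.index_eq_card, hNi]
  letI : CommGroup (G ⧸ N) := IsCyclic.commGroup
  letI : Fintype (G ⧸ N) := Fintype.ofFinite _
  letI : Fintype ↥N := Fintype.ofFinite _
  have hQp : Fintype.card (G ⧸ N) = p := by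
    rw [← Nat.card_eq_fintype_card, ← Subgroup.index_eq_card, hNi]
  have hNfq : Fintype.card ↥N = q := by
    rw [← Nat.card_eq_fintype_card]; exact hNq
  set φ := QuotientGroup.mk' N with hφ
  have hker : ∀ g : G, φ g = 1 ↔ g ∈ N := fun g => QuotientGroup.eq_one_iff g
  have hconj := conj_distinct hp hq hG hna N hN hNq hNi
  obtain ⟨Bs, rest, hsum, hrest, hall⟩ := greedy φ (Multiset.card S) S (le_refl _)
  have hBsS : Bs.sum ≤ S :=
    le_trans (Multiset.le_add_right _ _) (le_of_eq hsum)
  have hbag : ∀ B ∈ Bs, ∃ bag : DavBag G N, bag.B = B := by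
    intro B hB
    have hBle : B ≤ S := le_trans (mem_le_sum_s12 hB) hBsS
    have hmz := hall B hB
    apply block_to_bag φ hN hker hconj B hmz
    intro l hlB hl1
    exact hfree B hBle hmz.1.1 ⟨l, hlB, hl1⟩
  set bags := Bs.pmap (fun B hB => (hbag B hB).choose) (fun _ h => h) with hbags
  have hmapB : ∀ (L : List (Multiset G)) (H : ∀ B ∈ L, B ∈ Bs),
      (L.pmap (fun B hB => (hbag B hB).choose) H).map DavBag.B = L := by
    intro L
    induction L with
    | nil => intro _; simp
    | cons B L ih =>
        intro H
        simp only [List.pmap, List.map_cons]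
        rw [(hbag B (H B List.mem_cons_self)).choose_spec, ih]
  have hbagsB : bags.map DavBag.B = Bs := hmapB Bs (fun _ h => h)
  have hcardsum : ∀ L : List (Multiset G),
      Multiset.card L.sum = (L.map Multiset.card).sum := by
    intro L
    induction L with
    | nil => simp
    | cons B L ih => simp [ih]
  have hAB : (bags.map (fun b => b.A.card)).sum
      = (bags.map (fun b => Multiset.card b.B)).sum := by
    congr 1
    apply List.map_congr_left
    intro b _
    exact b.hsize
  have hsum2 : q ≤ (bags.map (fun b => b.A.card)).sum := by
    rw [hAB]
    have h1 : (bags.map (fun b => Multiset.card b.B)).sum = Multiset.card Bs.sum := by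
      rw [hcardsum, ← hbagsB, List.map_map]
      rfl
    rw [h1]
    have h2 : Multiset.card Bs.sum + Multiset.card rest = Multiset.card S := by
      rw [← Multiset.card_add, hsum]
    rw [hQp] at hrest
    omega
  obtain ⟨w, hwne, hwle, hwprod⟩ := bags_main hq hNfq bags hsum2
  rw [hbagsB] at hwle
  exact hfree ↑w (le_trans hwle hBsS) (by simpa using hwne) ⟨w, rfl, hwprod⟩

lemma lower_bound (hp : p.Prime) (hq : q.Prime) (hlt : p < q) (hG : Nat.card G = p * q) :
    ∃ S : Multiset G, Multiset.card S = q + p - 2 ∧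
      ∀ T : Multiset G, T ≤ S → T ≠ 0 → ¬ IsProductOne T := by
  classical
  obtain ⟨N, hN, hNq, hNi⟩ := sylow_setup hp hq hlt hG
  haveI := hN
  haveI : Fact p.Prime := ⟨hp⟩
  haveI : Fact q.Prime := ⟨hq⟩
  haveI : IsCyclic (G ⧸ N) := by
    apply isCyclic_of_prime_card (p := p)
    rw [← Subgroup.index_eq_card, hNi]
  letI : CommGroup (G ⧸ N) := IsCyclic.commGroup
  letI : Fintype ↥N := Fintype.ofFinite _
  have hnt : Nontrivial ↥N := by
    apply Fintype.one_lt_card_iff_nontrivial.mp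
    rw [← Nat.card_eq_fintype_card, hNq]
    exact hq.one_lt
  obtain ⟨a0, ha0⟩ := exists_ne (1 : ↥N)
  set aG := (a0 : G) with haG
  have haGN : aG ∈ N := a0.2
  have haG1 : aG ≠ 1 := fun h => ha0 (Subtype.ext h)
  have horda : orderOf aG = q := by
    have h1 : orderOf a0 ∣ q := hNq ▸ orderOf_dvd_natCard a0
    rcases hq.eq_one_or_self_of_dvd _ h1 with h2 | h2
    · exact absurd (congrArg Subtype.val (orderOf_eq_one_iff.mp h2)) haG1
    · rw [← h2]
      exact Subgroup.orderOf_coe a0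
  have hbex : ∃ b : G, b ∉ N := by
    by_contra hb
    push_neg at hb
    have htop : N = ⊤ := (Subgroup.eq_top_iff' N).mpr hb
    have hcard : Nat.card ↥N = Nat.card G := by rw [htop]; exact Subgroup.card_top
    rw [hNq, hG] at hcard
    have h2 : 2 * q ≤ p * q := Nat.mul_le_mul_right q hp.two_le
    omega
  obtain ⟨b, hbN⟩ := hbex
  set φ := QuotientGroup.mk' N with hφ
  have hφb : φ b ≠ 1 := fun h => hbN ((QuotientGroup.eq_one_iff b).mp h)
  have hordb : orderOf (φ b) = p := by
    have hQp : Nat.card (G ⧸ N) = p := by rw [← Subgroup.index_eq_card, hNi]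
    have h1 : orderOf (φ b) ∣ p := hQp ▸ orderOf_dvd_natCard _
    rcases hp.eq_one_or_self_of_dvd _ h1 with h2 | h2
    · exact absurd (orderOf_eq_one_iff.mp h2) hφb
    · exact h2
  have hab : aG ≠ b := fun h => hbN (h ▸ haGN)
  refine ⟨Multiset.replicate (q-1) aG + Multiset.replicate (p-1) b, ?_, ?_⟩
  · rw [Multiset.card_add, Multiset.card_replicate, Multiset.card_replicate]
    have := hp.two_le; have := hq.two_le
    omega
  · intro T hTle hT0 hpone
    obtain ⟨l, hlT, hl1⟩ := hpone
    set i := T.count aG with hi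
    set j := T.count b with hj
    have hTeq : T = Multiset.replicate i aG + Multiset.replicate j b := by
      ext x
      rw [Multiset.count_add, Multiset.count_replicate, Multiset.count_replicate]
      by_cases hxa : x = aG
      · subst hxa
        rw [if_pos rfl, if_neg (Ne.symm hab), add_zero, hi]
      · by_cases hxb : x = b
        · subst hxb
          rw [if_neg hab, if_pos rfl, zero_add, hj]
        · rw [if_neg (fun h => hxa h.symm), if_neg (fun h => hxb h.symm), add_zero]
          rw [Multiset.count_eq_zero]
          intro hxT
          have hxS := Multiset.mem_of_le hTle hxT
          rw [Multiset.mem_add] at hxS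
          rcases hxS with h | h
          · exact hxa (Multiset.eq_of_mem_replicate h)
          · exact hxb (Multiset.eq_of_mem_replicate h)
    have hjle : j ≤ p - 1 := by
      have hcount := Multiset.count_le_of_le b hTle
      rw [Multiset.count_add, Multiset.count_replicate, Multiset.count_replicate,
        if_neg hab, if_pos rfl, zero_add] at hcount
      exact hcount
    have hile : i ≤ q - 1 := by
      have hcount := Multiset.count_le_of_le aG hTle
      rw [Multiset.count_add, Multiset.count_replicate, Multiset.count_replicate,
        if_pos rfl, if_neg (Ne.symm hab), add_zero] at hcount
      exact hcount
    have hphi : (φ b) ^ j = 1 := by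
      have h1 : φ l.prod = 1 := by rw [hl1]; exact map_one φ
      have h2 : φ l.prod = (l.map φ).prod := map_list_prod φ l
      have h3 : (T.map φ).prod = (l.map φ).prod := by
        rw [← hlT, Multiset.map_coe, Multiset.prod_coe]
      have h4 : (T.map φ).prod = (φ aG)^i * (φ b)^j := by
        rw [hTeq, Multiset.map_add, Multiset.prod_add, Multiset.map_replicate,
          Multiset.map_replicate, Multiset.prod_replicate, Multiset.prod_replicate]
      have h5 : φ aG = 1 := (QuotientGroup.eq_one_iff aG).mpr haGN
      rw [h5, one_pow, one_mul] at h4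
      rw [← h4, h3, ← h2, h1]
    have hjdvd : p ∣ j := hordb ▸ orderOf_dvd_of_pow_eq_one hphi
    have hj0 : j = 0 := by
      rcases Nat.eq_zero_or_pos j with h | h
      · exact h
      · exfalso
        have := Nat.le_of_dvd h hjdvd
        have := hp.two_le
        omega
    rw [hj0] at hTeq
    simp only [Multiset.replicate_zero, add_zero] at hTeq
    have halla : ∀ x ∈ l, x = aG := by
      intro x hx
      have hxT : x ∈ T := by
        rw [← hlT]
        exact_mod_cast hx
      rw [hTeq] at hxT
      exact Multiset.eq_of_mem_replicate hxT
    have hlprod : l.prod = aG ^ l.length := List.prod_eq_pow_card l aG halla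
    have hlen : l.length = i := by
      have hc : Multiset.card (l : Multiset G) = Multiset.card T := by rw [hlT]
      rw [Multiset.coe_card, hTeq, Multiset.card_replicate] at hc
      exact hc
    have haGi : aG ^ i = 1 := by rw [← hlen, ← hlprod, hl1]
    have hidvd : q ∣ i := horda ▸ orderOf_dvd_of_pow_eq_one haGi
    have hi0 : i = 0 := by
      rcases Nat.eq_zero_or_pos i with h | h
      · exact h
      · exfalso
        have := Nat.le_of_dvd h hidvd
        have := hq.two_le
        omega
    apply hT0
    rw [hTeq, hi0]
    simp

end Main

theorem stmt12 (p q : ℕ) (hp : p.Prime) (hq : q.Prime) (hpq : p ∣ q - 1)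
    (G : Type*) [Group G] [Finite G] (hG : Nat.card G = p * q)
    (hna : ¬ ∀ a b : G, a * b = b * a) :
    smallDavenport G = q + p - 2 := by
  have hq2 := hq.two_le
  have hp2 := hp.two_le
  have hlt : p < q := by
    have hle := Nat.le_of_dvd (by omega) hpq
    omega
  obtain ⟨S₀, hS₀card, hS₀free⟩ := lower_bound hp hq hlt hG
  rw [smallDavenport]
  have hub : ∀ n ∈ {n | ∃ S : Multiset G, Multiset.card S = n ∧
      ∀ T : Multiset G, T ≤ S → T ≠ 0 → ¬ IsProductOne T}, n ≤ q + p - 2 := by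
    rintro n ⟨S, hScard, hSfree⟩
    rw [← hScard]
    exact upper_bound hp hq hlt hG hna S hSfree
  have hmem : (q + p - 2) ∈ {n | ∃ S : Multiset G, Multiset.card S = n ∧
      ∀ T : Multiset G, T ≤ S → T ≠ 0 → ¬ IsProductOne T} := ⟨S₀, hS₀card, hS₀free⟩
  exact le_antisymm (csSup_le ⟨_, hmem⟩ hub) (le_csSup ⟨_, hub⟩ hmem)
end

section
/- Let p and q be odd primes with p dividing q−1, let r be an element of the field F_q = Z/qZ of multiplicative order p, and let A ⊆ F_q be a subset which is a union of sets of the form {0} and g·{1, r, r², …, r^{p−1}} with g ∈ F_q \ {0}. If 2 ≤ |A| ≤ q − 2, then A is not an arithmetic progression, i.e. there exist no a ∈ F_q and d ∈ F_q \ {0} with A = {a, a+d, a+2d, …, a+(|A|−1)d}. -/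
lemma natCast_inj_of_lt' {q : ℕ} [NeZero q] {i j : ℕ} (hi : i < q) (hj : j < q)
    (h : (i : ZMod q) = j) : i = j := by
  have := congrArg ZMod.val h
  rwa [ZMod.val_cast_of_lt hi, ZMod.val_cast_of_lt hj] at this

lemma ap_diff_unique' (q : ℕ) (hq : q.Prime) (n : ℕ) (hn2 : 2 ≤ n) (hn3 : n ≤ q - 2)
    (a b d e : ZMod q) (hd : d ≠ 0) (he : e ≠ 0)
    (hset : {x : ZMod q | ∃ i : ℕ, i < n ∧ x = a + (i : ZMod q) * d}
          = {x : ZMod q | ∃ i : ℕ, i < n ∧ x = b + (i : ZMod q) * e}) :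
    e = d ∨ e = -d := by
  classical
  haveI : Fact q.Prime := ⟨hq⟩
  haveI : NeZero q := ⟨hq.ne_zero⟩
  have hq4 : 4 ≤ q := by omega
  set A : Set (ZMod q) := {x | ∃ i : ℕ, i < n ∧ x = a + (i : ZMod q) * d} with hAdef
  have hAd : ∀ x, x ∈ A ↔ ∃ i : ℕ, i < n ∧ x = a + (i : ZMod q) * d := fun x => Iff.rfl
  have hAe : ∀ x, x ∈ A ↔ ∃ i : ℕ, i < n ∧ x = b + (i : ZMod q) * e := by
    intro x; rw [hset]; exact Iff.rfl
  set m : ZMod q := e * d⁻¹ with hmdef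
  have hm : m ≠ 0 := mul_ne_zero he (inv_ne_zero hd)
  have hme : m * d = e := by rw [hmdef, mul_assoc, inv_mul_cancel₀ hd, mul_one]
  set k : ℕ := m.val with hkdef
  have hk1 : 0 < k := by
    rcases Nat.eq_zero_or_pos k with h | h
    · exact absurd ((ZMod.val_eq_zero m).mp h) hm
    · exact h
  have hk2 : k < q := ZMod.val_lt m
  have hkm : ((k : ℕ) : ZMod q) = m := by rw [hkdef, ZMod.natCast_val, ZMod.cast_id]
  set T1 : Finset ℕ := (Finset.range n).filter (fun i => a + (i : ZMod q) * d + e ∈ A)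
    with hT1def
  set T2 : Finset ℕ := (Finset.range n).filter (fun i => b + (i : ZMod q) * e + e ∈ A)
    with hT2def
  have hT2card : T2.card = n - 1 := by
    have hT2eq : T2 = Finset.range (n - 1) := by
      ext i
      simp only [hT2def, Finset.mem_filter, Finset.mem_range]
      constructor
      · rintro ⟨hi, hmem⟩
        obtain ⟨j, hj, hx⟩ := (hAe _).mp hmem
        have h1 : ((i : ZMod q) + 1) * e = (j : ZMod q) * e := by linear_combination hx
        have h2 : ((i + 1 : ℕ) : ZMod q) = (j : ZMod q) := by
          push_cast
          exact mul_right_cancel₀ he h1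
        have := natCast_inj_of_lt' (by omega) (by omega) h2
        omega
      · intro hi
        refine ⟨by omega, ?_⟩
        exact (hAe _).mpr ⟨i + 1, by omega, by push_cast; ring⟩
    rw [hT2eq, Finset.card_range]
  have hshift : ∀ i : ℕ, a + (i : ZMod q) * d + e = a + ((i + k : ℕ) : ZMod q) * d := by
    intro i
    push_cast
    rw [hkm, ← hme]
    ring
  have hT1eq : T1 = (Finset.range n).filter (fun i => (i + k) % q < n) := by
    ext i
    simp only [hT1def, Finset.mem_filter, Finset.mem_range]
    constructor
    · rintro ⟨hi, hmem⟩
      refine ⟨hi, ?_⟩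
      rw [hshift] at hmem
      obtain ⟨j, hj, hx⟩ := (hAd _).mp hmem
      have h1 : ((i + k : ℕ) : ZMod q) = (j : ZMod q) := by
        have h0 : ((i + k : ℕ) : ZMod q) * d = (j : ZMod q) * d := by linear_combination hx
        exact mul_right_cancel₀ hd h0
      have h2 : (((i + k) % q : ℕ) : ZMod q) = (j : ZMod q) := by
        rw [ZMod.natCast_mod]; exact h1
      have := natCast_inj_of_lt' (Nat.mod_lt _ (by omega)) (by omega) h2
      omega
    · rintro ⟨hi, hmod⟩
      refine ⟨hi, ?_⟩
      rw [hshift]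
      refine (hAd _).mpr ⟨(i + k) % q, hmod, ?_⟩
      rw [ZMod.natCast_mod]
  have hT1eq2 : T1 = Finset.range (n - k) ∪ Finset.Ico (q - k) n := by
    rw [hT1eq]
    ext i
    simp only [Finset.mem_filter, Finset.mem_range, Finset.mem_union, Finset.mem_Ico]
    constructor
    · rintro ⟨hi, hmod⟩
      rcases Nat.lt_or_ge (i + k) q with h | h
      · rw [Nat.mod_eq_of_lt h] at hmod; omega
      · have h2 : (i + k) % q = i + k - q := by
          rw [Nat.mod_eq_sub_mod h, Nat.mod_eq_of_lt (by omega)]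
        omega
    · intro h
      have hi : i < n := by omega
      refine ⟨hi, ?_⟩
      rcases Nat.lt_or_ge (i + k) q with h' | h'
      · rw [Nat.mod_eq_of_lt h']; omega
      · rw [Nat.mod_eq_sub_mod h', Nat.mod_eq_of_lt (by omega)]; omega
  have hdisj : Disjoint (Finset.range (n - k)) (Finset.Ico (q - k) n) := by
    rw [Finset.disjoint_left]
    intro i hi1 hi2
    simp only [Finset.mem_range] at hi1
    simp only [Finset.mem_Ico] at hi2
    omega
  have hT1card : T1.card = (n - k) + (n - (q - k)) := by
    rw [hT1eq2, Finset.card_union_of_disjoint hdisj, Finset.card_range, Nat.card_Ico]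
  have hinj1 : Set.InjOn (fun i : ℕ => a + (i : ZMod q) * d) ↑T1 := by
    intro i hi j hj hij
    simp only [hT1def, Finset.coe_filter, Set.mem_setOf_eq, Finset.mem_range] at hi hj
    simp only at hij
    have h1 : (i : ZMod q) * d = (j : ZMod q) * d := by linear_combination hij
    exact natCast_inj_of_lt' (by omega) (by omega) (mul_right_cancel₀ hd h1)
  have hinj2 : Set.InjOn (fun i : ℕ => b + (i : ZMod q) * e) ↑T2 := by
    intro i hi j hj hij
    simp only [hT2def, Finset.coe_filter, Set.mem_setOf_eq, Finset.mem_range] at hi hj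
    simp only at hij
    have h1 : (i : ZMod q) * e = (j : ZMod q) * e := by linear_combination hij
    exact natCast_inj_of_lt' (by omega) (by omega) (mul_right_cancel₀ he h1)
  have himg : T1.image (fun i : ℕ => a + (i : ZMod q) * d)
      = T2.image (fun i : ℕ => b + (i : ZMod q) * e) := by
    ext x
    simp only [Finset.mem_image, hT1def, hT2def, Finset.mem_filter, Finset.mem_range]
    constructor
    · rintro ⟨i, ⟨hi, hmem⟩, rfl⟩
      have hxA : a + (i : ZMod q) * d ∈ A := (hAd _).mpr ⟨i, hi, rfl⟩
      obtain ⟨j, hj, hx⟩ := (hAe _).mp hxA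
      exact ⟨j, ⟨hj, by rw [← hx]; exact hmem⟩, hx.symm⟩
    · rintro ⟨j, ⟨hj, hmem⟩, rfl⟩
      have hxA : b + (j : ZMod q) * e ∈ A := (hAe _).mpr ⟨j, hj, rfl⟩
      obtain ⟨i, hi, hx⟩ := (hAd _).mp hxA
      exact ⟨i, ⟨hi, by rw [← hx]; exact hmem⟩, hx.symm⟩
  have hcards : T1.card = T2.card := by
    rw [← Finset.card_image_of_injOn hinj1, himg, Finset.card_image_of_injOn hinj2]
  have hfin : n - 1 = (n - k) + (n - (q - k)) := by rw [← hT2card, ← hT1card, hcards]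
  have hk : k = 1 ∨ k = q - 1 := by omega
  rcases hk with h | h
  · left
    rw [← hme, ← hkm, h]
    push_cast
    ring
  · right
    rw [← hme, ← hkm, h]
    have hq1 : (1 : ℕ) ≤ q := by omega
    rw [Nat.cast_sub hq1, ZMod.natCast_self]
    push_cast
    ring

theorem stmt16 (p q : ℕ) (hp : p.Prime) (hq : q.Prime) (hpodd : Odd p)
    (hqodd : Odd q) (hpq : p ∣ q - 1)
    (r : ZMod q) (hr : orderOf r = p)
    (A : Set (ZMod q))
    (hA : ∃ 𝒮 : Set (Set (ZMod q)), A = ⋃₀ 𝒮 ∧ ∀ B ∈ 𝒮,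
      B = {0} ∨ ∃ g : ZMod q, g ≠ 0 ∧ B = {x | ∃ i : ℕ, i < p ∧ x = g * r ^ i})
    (hA2 : 2 ≤ A.ncard) (hA3 : A.ncard ≤ q - 2) :
    ¬ ∃ (a d : ZMod q), d ≠ 0 ∧
      A = {x | ∃ i : ℕ, i < A.ncard ∧ x = a + (i : ZMod q) * d} := by
  haveI : Fact q.Prime := ⟨hq⟩
  haveI : NeZero q := ⟨hq.ne_zero⟩
  obtain ⟨𝒮, h𝒮, hB⟩ := hA
  have hp1 : 1 ≤ p := hp.one_lt.le.trans' (by omega)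
  have hrp : r ^ p = 1 := by rw [← hr]; exact pow_orderOf_eq_one r
  have hstep : ∀ x ∈ A, r * x ∈ A := by
    intro x hx
    rw [h𝒮] at hx ⊢
    obtain ⟨B, hBmem, hxB⟩ := hx
    refine ⟨B, hBmem, ?_⟩
    rcases hB B hBmem with h0 | ⟨g, hg, hgB⟩
    · rw [h0] at hxB ⊢
      simp only [Set.mem_singleton_iff] at hxB ⊢
      rw [hxB, mul_zero]
    · rw [hgB] at hxB ⊢
      obtain ⟨i, hi, hxi⟩ := hxB
      by_cases hip : i + 1 < p
      · exact ⟨i + 1, hip, by rw [hxi]; ring⟩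
      · have hieq : i + 1 = p := by omega
        refine ⟨0, hp.pos, ?_⟩
        rw [hxi, pow_zero, mul_one]
        calc r * (g * r ^ i) = g * r ^ (i + 1) := by ring
          _ = g := by rw [hieq, hrp, mul_one]
  have hiter : ∀ j : ℕ, ∀ x ∈ A, r ^ j * x ∈ A := by
    intro j
    induction j with
    | zero => intro x hx; simpa using hx
    | succ j ih =>
      intro x hx
      have h1 := hstep _ (ih x hx)
      have heq : r * (r ^ j * x) = r ^ (j + 1) * x := by ring
      rwa [heq] at h1
  have hAr : ∀ x, x ∈ A ↔ r * x ∈ A := by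
    intro x
    constructor
    · exact hstep x
    · intro h
      have h1 := hiter (p - 1) _ h
      have heq : r ^ (p - 1) * (r * x) = x := by
        rw [← mul_assoc, ← pow_succ, Nat.sub_add_cancel hp1, hrp, one_mul]
      rwa [heq] at h1
  rintro ⟨a, d, hd, hAP⟩
  obtain ⟨s, hsr⟩ : ∃ s : ZMod q, s * r = 1 :=
    ⟨r ^ (p - 1), by rw [← pow_succ, Nat.sub_add_cancel hp1, hrp]⟩
  have hs0 : s ≠ 0 := by intro h; rw [h, zero_mul] at hsr; exact zero_ne_one hsr
  have hset2 : A = {x : ZMod q | ∃ i : ℕ, i < A.ncard ∧ x = s * a + (i : ZMod q) * (s * d)} := by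
    ext x
    constructor
    · intro hx
      have hrx : r * x ∈ A := hstep x hx
      rw [hAP] at hrx
      obtain ⟨i, hi, hrxi⟩ := hrx
      refine ⟨i, hi, ?_⟩
      calc x = (s * r) * x := by rw [hsr, one_mul]
        _ = s * (r * x) := by ring
        _ = s * (a + (i : ZMod q) * d) := by rw [hrxi]
        _ = s * a + (i : ZMod q) * (s * d) := by ring
    · rintro ⟨i, hi, hx⟩
      have hrx : r * x = a + (i : ZMod q) * d := by
        rw [hx]
        calc r * (s * a + (i : ZMod q) * (s * d))
            = (s * r) * a + (i : ZMod q) * ((s * r) * d) := by ring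
          _ = a + (i : ZMod q) * d := by rw [hsr]; ring
      exact (hAr x).mpr (by rw [hAP]; exact ⟨i, hi, hrx⟩)
  have hkey := ap_diff_unique' q hq A.ncard hA2 hA3 a (s * a) d (s * d) hd
    (mul_ne_zero hs0 hd) (hAP.symm.trans hset2)
  rcases hkey with h | h
  · have hs1 : s = 1 := by
      have : s * d = 1 * d := by rw [h, one_mul]
      exact mul_right_cancel₀ hd this
    rw [hs1, one_mul] at hsr
    rw [hsr, orderOf_one] at hr
    exact absurd hr.symm hp.one_lt.ne'
  · have hs1 : s = -1 := by
      have : s * d = (-1) * d := by rw [h]; ring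
      exact mul_right_cancel₀ hd this
    rw [hs1] at hsr
    have hrneg : r = -1 := by linear_combination -hsr
    have hr2 : r ^ 2 = 1 := by rw [hrneg]; ring
    have hdvd : p ∣ 2 := hr ▸ orderOf_dvd_of_pow_eq_one hr2
    have hple : p = 2 := by
      have := Nat.le_of_dvd (by norm_num) hdvd
      have := hp.two_le
      omega
    obtain ⟨c, hc⟩ := hpodd
    omega
end
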